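/- arXiv:2405.04088 — 15 statements merged into one kernel-verified Lean document; each statement's English description precedes it below -/
import Mathlib

section
/- Let X be a nonempty set, Z a nonempty parameter set, and ▷_{(u,v)} : X × X → X a family of binary operations indexed by (u,v) ∈ Z × Z. Define R^{(u,v)} : X × X → X × X by R^{(u,v)}(x,y) = (x, x ▷_{(u,v)} y). Then the family R^{(u,v)} is a solution of the parametric set-theoretic Yang–Baxter equation if and only if ▷ satisfies parametric self-distributivity, i.e. a ▷_{(z₁,z₃)} (b ▷_{(z₂,z₃)} c) = (a ▷_{(z₁,z₂)} b) ▷_{(z₂,z₃)} (a ▷_{(z₁,z₃)} c) for all a,b,c ∈ X and z₁,z₂,z₃ ∈ Z. -/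
namespace Stmt0

variable {X Z : Type*}

/-- `R₁₂` acting on the first two factors of `X × X × X`. -/
def R12 (R : X × X → X × X) : X × X × X → X × X × X :=
  fun p => ((R (p.1, p.2.1)).1, (R (p.1, p.2.1)).2, p.2.2)

/-- `R₂₃` acting on the last two factors of `X × X × X`. -/
def R23 (R : X × X → X × X) : X × X × X → X × X × X :=
  fun p => (p.1, R p.2)

/-- `R₁₃` acting on the first and third factors of `X × X × X`. -/
def R13 (R : X × X → X × X) : X × X × X → X × X × X :=
  fun p => ((R (p.1, p.2.2)).1, p.2.1, (R (p.1, p.2.2)).2)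

/-- The parametric set-theoretic Yang–Baxter equation for a family
`R^{(u,v)} : X × X → X × X`. -/
def IsPYBE (R : Z → Z → X × X → X × X) : Prop :=
  ∀ z1 z2 z3 : Z,
    R12 (R z1 z2) ∘ R13 (R z1 z3) ∘ R23 (R z2 z3) =
      R23 (R z2 z3) ∘ R13 (R z1 z3) ∘ R12 (R z1 z2)

theorem shelf_solution_iff_self_distributive [Nonempty X] [Nonempty Z]
    (tri : Z → Z → X → X → X) :
    IsPYBE (fun u v (p : X × X) => (p.1, tri u v p.1 p.2)) ↔
      ∀ (a b c : X) (z1 z2 z3 : Z),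
        tri z1 z3 a (tri z2 z3 b c) =
          tri z2 z3 (tri z1 z2 a b) (tri z1 z3 a c) := by
  constructor
  · intro h a b c z1 z2 z3
    have := congrFun (h z1 z2 z3) (a, b, c)
    simp [R12, R13, R23, IsPYBE, Prod.ext_iff, Function.comp] at this
    exact this
  · intro h z1 z2 z3
    funext p
    obtain ⟨a, b, c⟩ := p
    simp [R12, R13, R23, Function.comp, h a b c z1 z2 z3]

end Stmt0
end

section
/- Let (X,+,∘) be a skew brace and Y ⊆ X a subset such that (i) for all a,b ∈ X and z ∈ Y, (a+b) ∘ z = a ∘ z − z + b ∘ z, and (ii) every z ∈ Y is central in the group (X,+). Fix ξ ∈ X and for z_i, z_j ∈ Y define a ▷_{(z_i,z_j)} b := −(ξ ∘ a ∘ z_i ∘ z_j⁻¹) + ξ ∘ b + a ∘ z_i ∘ z_j⁻¹. Then ▷ is a p-rack structure on X with parameters in Y: it satisfies parametric self-distributivity for all parameters in Y, and each map b ↦ a ▷_{(z_i,z_j)} b is a bijection of X (with inverse b ↦ a ∘ z_i ∘ z_j⁻¹ − ξ⁻¹ + ξ⁻¹ ∘ b − ξ⁻¹ ∘ a ∘ z_i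 ∘ z_j⁻¹ + ξ⁻¹). Consequently R^{(z_i,z_j)}(a,b) := (a, a ▷_{(z_i,z_j)} b) is an invertible solution of the parametric set-theoretic Yang–Baxter equation with parameters in Y. -/
namespace Stmt2

/-- A (left) skew brace: two group structures `+` and `∘` on the same set,
sharing a neutral element, with `a ∘ (b + c) = a ∘ b − a + a ∘ c`. -/
structure SkewBrace (X : Type*) where
  add : X → X → X
  zero : X
  neg : X → X
  mul : X → X → X
  one : X
  inv : X → X
  add_assoc : ∀ a b c, add (add a b) c = add a (add b c)
  zero_add : ∀ a, add zero a = a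
  add_zero : ∀ a, add a zero = a
  neg_add : ∀ a, add (neg a) a = zero
  add_neg : ∀ a, add a (neg a) = zero
  mul_assoc : ∀ a b c, mul (mul a b) c = mul a (mul b c)
  one_mul : ∀ a, mul one a = a
  mul_one : ∀ a, mul a one = a
  inv_mul : ∀ a, mul (inv a) a = one
  mul_inv : ∀ a, mul a (inv a) = one
  zero_eq_one : zero = one
  brace : ∀ a b c, mul a (add b c) = add (add (mul a b) (neg a)) (mul a c)

variable {X : Type*}

/-- `a ▷_{(z_i,z_j)} b := −(ξ ∘ a ∘ z_i ∘ z_j⁻¹) + ξ ∘ b + a ∘ z_i ∘ z_j⁻¹`. -/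
def tri (B : SkewBrace X) (ξ : X) (zi zj a b : X) : X :=
  B.add (B.add (B.neg (B.mul (B.mul (B.mul ξ a) zi) (B.inv zj))) (B.mul ξ b))
    (B.mul (B.mul a zi) (B.inv zj))

/-- The claimed inverse `b ↦ a ∘ z_i ∘ z_j⁻¹ − ξ⁻¹ + ξ⁻¹ ∘ b − ξ⁻¹ ∘ a ∘ z_i ∘ z_j⁻¹ + ξ⁻¹`. -/
def triInv (B : SkewBrace X) (ξ : X) (zi zj a b : X) : X :=
  B.add
    (B.add
      (B.add (B.add (B.mul (B.mul a zi) (B.inv zj)) (B.neg (B.inv ξ)))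
        (B.mul (B.inv ξ) b))
      (B.neg (B.mul (B.mul (B.mul (B.inv ξ) a) zi) (B.inv zj))))
    (B.inv ξ)

def R12 (R : X × X → X × X) : X × X × X → X × X × X :=
  fun p => ((R (p.1, p.2.1)).1, (R (p.1, p.2.1)).2, p.2.2)

def R23 (R : X × X → X × X) : X × X × X → X × X × X :=
  fun p => (p.1, R p.2)

def R13 (R : X × X → X × X) : X × X × X → X × X × X :=
  fun p => ((R (p.1, p.2.2)).1, p.2.1, (R (p.1, p.2.2)).2)

/-- The Yang–Baxter map `R^{(z_i,z_j)}(a,b) = (a, a ▷_{(z_i,z_j)} b)`. -/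
def Rmap (B : SkewBrace X) (ξ : X) (zi zj : X) : X × X → X × X :=
  fun p => (p.1, tri B ξ zi zj p.1 p.2)


def trig {G : Type*} [Group G] (m : G → G → G) (i : G → G) (ξ zi zj a b : G) : G :=
  (m (m (m ξ a) zi) (i zj))⁻¹ * m ξ b * m (m a zi) (i zj)


def trigInv {G : Type*} [Group G] (m : G → G → G) (i : G → G) (ξ zi zj a b : G) : G :=
  m (m a zi) (i zj) * (i ξ)⁻¹ * m (i ξ) b * (m (m (m (i ξ) a) zi) (i zj))⁻¹ * i ξ

def addGroup {X : Type*} (B : SkewBrace X) : Group X where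
  mul := B.add
  one := B.zero
  inv := B.neg
  mul_assoc := B.add_assoc
  one_mul := B.zero_add
  mul_one := B.add_zero
  inv_mul_cancel := B.neg_add

section Abstract
variable {G : Type*} [Group G] (m : G → G → G) (i : G → G) (ξ : G)

lemma hmneg_of (hbrace : ∀ x y z, m x (y * z) = m x y * x⁻¹ * m x z)
    (honer : ∀ x, m x 1 = x) :
    ∀ p x, m p x⁻¹ = p * (m p x)⁻¹ * p := by
  intro p x
  have h := hbrace p x x⁻¹
  rw [mul_inv_cancel, honer] at h
  calc m p x⁻¹ = (m p x * p⁻¹)⁻¹ * (m p x * p⁻¹ * m p x⁻¹) := by group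
    _ = (m p x * p⁻¹)⁻¹ * p := by rw [← h]
    _ = p * (m p x)⁻¹ * p := by group


lemma word_id {G : Type*} [Group G] (xi F w2 P Q K M N A1 : G)
    (hF : ∀ t, F * t * F⁻¹ = xi * t * xi⁻¹)
    (hw : ∀ t, w2 * t = t * w2) :
    P⁻¹ * (xi * K⁻¹ * M * xi⁻¹ * N) * A1
      = (F * Q⁻¹ * K * F⁻¹ * P)⁻¹ * (xi * Q⁻¹ * M * xi⁻¹ * P) * (w2 * P⁻¹ * N * w2⁻¹ * A1) := by
  symm
  calc (F * Q⁻¹ * K * F⁻¹ * P)⁻¹ * (xi * Q⁻¹ * M * xi⁻¹ * P) * (w2 * P⁻¹ * N * w2⁻¹ * A1)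
      = P⁻¹ * (F * (K⁻¹ * Q) * F⁻¹) * (xi * Q⁻¹ * M * xi⁻¹ * (P * w2) * P⁻¹ * N * w2⁻¹ * A1) := by
        group
    _ = P⁻¹ * (xi * (K⁻¹ * Q) * xi⁻¹) * (xi * Q⁻¹ * M * xi⁻¹ * (w2 * P) * P⁻¹ * N * w2⁻¹ * A1) := by
        rw [hF (K⁻¹ * Q), ← hw P]
    _ = P⁻¹ * xi * K⁻¹ * M * xi⁻¹ * (w2 * N) * w2⁻¹ * A1 := by group
    _ = P⁻¹ * xi * K⁻¹ * M * xi⁻¹ * (N * w2) * w2⁻¹ * A1 := by rw [hw N]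
    _ = P⁻¹ * (xi * K⁻¹ * M * xi⁻¹ * N) * A1 := by group

lemma key_selfdist
    (hassoc : ∀ x y z, m (m x y) z = m x (m y z))
    (honer : ∀ x, m x 1 = x) (honel : ∀ x, m 1 x = x)
    (hinvr : ∀ x, m x (i x) = 1) (hinvl : ∀ x, m (i x) x = 1)
    (hbrace : ∀ x y z, m x (y * z) = m x y * x⁻¹ * m x z)
    (z1 z2 z3 : G)
    (hd2 : ∀ x y, m (x * y) z2 = m x z2 * z2⁻¹ * m y z2)
    (hd3 : ∀ x y, m (x * y) z3 = m x z3 * z3⁻¹ * m y z3)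
    (hc2 : ∀ x, z2 * x = x * z2) (hc3 : ∀ x, z3 * x = x * z3)
    (a b c : G) :
    trig m i ξ z1 z3 a (trig m i ξ z2 z3 b c)
      = trig m i ξ z2 z3 (trig m i ξ z1 z2 a b) (trig m i ξ z1 z3 a c) := by
  have hmneg := hmneg_of m hbrace honer
  have hinj3 : ∀ u v, m u z3 = m v z3 → u = v := by
    intro u v h
    have h2 := congrArg (fun t => m t (i z3)) h
    simpa [hassoc, hinvr, honer] using h2
  have hd2inv : ∀ x, m x⁻¹ z2 = z2 * (m x z2)⁻¹ * z2 := by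
    intro x
    have h := hd2 x x⁻¹
    rw [mul_inv_cancel, honel] at h
    calc m x⁻¹ z2 = (m x z2 * z2⁻¹)⁻¹ * (m x z2 * z2⁻¹ * m x⁻¹ z2) := by group
      _ = (m x z2 * z2⁻¹)⁻¹ * z2 := by rw [← h]
      _ = z2 * (m x z2)⁻¹ * z2 := by group
  have hd3inv : ∀ x, m x⁻¹ z3 = z3 * (m x z3)⁻¹ * z3 := by
    intro x
    have h := hd3 x x⁻¹
    rw [mul_inv_cancel, honel] at h
    calc m x⁻¹ z3 = (m x z3 * z3⁻¹)⁻¹ * (m x z3 * z3⁻¹ * m x⁻¹ z3) := by group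
      _ = (m x z3 * z3⁻¹)⁻¹ * z3 := by rw [← h]
      _ = z3 * (m x z3)⁻¹ * z3 := by group
  have hdi3 : ∀ x y, m (x * y) (i z3) = m x (i z3) * (i z3)⁻¹ * m y (i z3) := by
    intro x y
    apply hinj3
    have e1 : m (m (x * y) (i z3)) z3 = x * y := by rw [hassoc, hinvl, honer]
    rw [e1, hd3, hd3, hd3inv, hassoc x (i z3) z3, hassoc y (i z3) z3, hinvl,
      honer, honer]
    group
  have hdi3inv : ∀ x, m x⁻¹ (i z3) = i z3 * (m x (i z3))⁻¹ * i z3 := by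
    intro x
    have h := hdi3 x x⁻¹
    rw [mul_inv_cancel, honel] at h
    calc m x⁻¹ (i z3)
        = (m x (i z3) * (i z3)⁻¹)⁻¹ * (m x (i z3) * (i z3)⁻¹ * m x⁻¹ (i z3)) := by group
      _ = (m x (i z3) * (i z3)⁻¹)⁻¹ * i z3 := by rw [← h]
      _ = i z3 * (m x (i z3))⁻¹ * i z3 := by group
  have hc3inv : ∀ x, z3⁻¹ * x = x * z3⁻¹ := by
    intro x
    calc z3⁻¹ * x = z3⁻¹ * (x * z3) * z3⁻¹ := by group
      _ = z3⁻¹ * (z3 * x) * z3⁻¹ := by rw [hc3]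
      _ = x * z3⁻¹ := by group
  have hcw2 : ∀ x, m z2 (i z3) * x = x * m z2 (i z3) := by
    intro x
    apply hinj3
    rw [hd3 (m z2 (i z3)) x, hd3 x (m z2 (i z3)), hassoc z2 (i z3) z3, hinvl, honer,
      mul_assoc z2 z3⁻¹ (m x z3), hc2 (z3⁻¹ * m x z3), hc3inv (m x z3)]
  have hF : ∀ t, m ξ (m z2 (i z3)) * t * (m ξ (m z2 (i z3)))⁻¹ = ξ * t * ξ⁻¹ := by
    intro t
    have hy : m ξ (m (i ξ) (ξ * t)) = ξ * t := by rw [← hassoc, hinvr, honel]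
    have h1 : m ξ (m z2 (i z3) * m (i ξ) (ξ * t))
        = m ξ (m (i ξ) (ξ * t) * m z2 (i z3)) := by rw [hcw2]
    rw [hbrace ξ (m z2 (i z3)) (m (i ξ) (ξ * t)),
      hbrace ξ (m (i ξ) (ξ * t)) (m z2 (i z3)), hy] at h1
    calc m ξ (m z2 (i z3)) * t * (m ξ (m z2 (i z3)))⁻¹
        = m ξ (m z2 (i z3)) * ξ⁻¹ * (ξ * t) * (m ξ (m z2 (i z3)))⁻¹ := by group
      _ = ξ * t * ξ⁻¹ * m ξ (m z2 (i z3)) * (m ξ (m z2 (i z3)))⁻¹ := by rw [h1]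
      _ = ξ * t * ξ⁻¹ := by group
  -- generic associativity conversions
  have hE13 : ∀ x, m (m (m ξ x) z1) (i z3) = m ξ (m (m x z1) (i z3)) := fun x => by
    rw [hassoc ξ x z1, hassoc]
  have hE12 : ∀ x, m (m (m ξ x) z1) (i z2) = m ξ (m (m x z1) (i z2)) := fun x => by
    rw [hassoc ξ x z1, hassoc]
  have hE23 : ∀ x, m (m (m ξ x) z2) (i z3) = m ξ (m (m x z2) (i z3)) := fun x => by
    rw [hassoc ξ x z2, hassoc]
  -- main computation
  simp only [trig]
  rw [hE13 a, hE23 b, hE12 a]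
  have hcolV : m (m (m a z1) (i z2)) z2 = m a z1 := by
    rw [hassoc (m a z1) (i z2) z2, hinvl, honer]
  have hEs : m ξ ((m ξ (m (m b z2) (i z3)))⁻¹ * m ξ c * m (m b z2) (i z3))
      = ξ * (m ξ (m ξ (m (m b z2) (i z3))))⁻¹ * m ξ (m ξ c) * ξ⁻¹
          * m ξ (m (m b z2) (i z3)) := by
    rw [hbrace ξ ((m ξ (m (m b z2) (i z3)))⁻¹ * m ξ c) (m (m b z2) (i z3)),
        hbrace ξ ((m ξ (m (m b z2) (i z3)))⁻¹) (m ξ c), hmneg]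
    group
  have hEC : m ξ ((m ξ (m (m a z1) (i z3)))⁻¹ * m ξ c * m (m a z1) (i z3))
      = ξ * (m ξ (m ξ (m (m a z1) (i z3))))⁻¹ * m ξ (m ξ c) * ξ⁻¹
          * m ξ (m (m a z1) (i z3)) := by
    rw [hbrace ξ ((m ξ (m (m a z1) (i z3)))⁻¹ * m ξ c) (m (m a z1) (i z3)),
        hbrace ξ ((m ξ (m (m a z1) (i z3)))⁻¹) (m ξ c), hmneg]
    group
  have hfA : m (m ((m ξ (m (m a z1) (i z2)))⁻¹ * m ξ b * m (m a z1) (i z2)) z2) (i z3)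
      = m z2 (i z3) * (m ξ (m (m a z1) (i z3)))⁻¹ * m ξ (m (m b z2) (i z3))
          * (m z2 (i z3))⁻¹ * m (m a z1) (i z3) := by
    rw [hd2 ((m ξ (m (m a z1) (i z2)))⁻¹ * m ξ b) (m (m a z1) (i z2)),
        hd2 ((m ξ (m (m a z1) (i z2)))⁻¹) (m ξ b),
        hd2inv (m ξ (m (m a z1) (i z2))),
        hassoc ξ (m (m a z1) (i z2)) z2, hcolV]
    rw [hdi3, hdi3, hdi3, hdi3, hdi3, hdi3, hdi3inv, hdi3inv]
    rw [hE23 b, hassoc ξ (m a z1) (i z3)]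
    group
  rw [hE23 ((m ξ (m (m a z1) (i z2)))⁻¹ * m ξ b * m (m a z1) (i z2)), hfA]
  have hEfA2 : m ξ (m z2 (i z3) * (m ξ (m (m a z1) (i z3)))⁻¹ * m ξ (m (m b z2) (i z3))
        * (m z2 (i z3))⁻¹ * m (m a z1) (i z3))
      = m ξ (m z2 (i z3)) * (m ξ (m ξ (m (m a z1) (i z3))))⁻¹
          * m ξ (m ξ (m (m b z2) (i z3))) * (m ξ (m z2 (i z3)))⁻¹
          * m ξ (m (m a z1) (i z3)) := by
    rw [hbrace ξ (m z2 (i z3) * (m ξ (m (m a z1) (i z3)))⁻¹ * m ξ (m (m b z2) (i z3))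
          * (m z2 (i z3))⁻¹) (m (m a z1) (i z3)),
        hbrace ξ (m z2 (i z3) * (m ξ (m (m a z1) (i z3)))⁻¹ * m ξ (m (m b z2) (i z3)))
          ((m z2 (i z3))⁻¹),
        hbrace ξ (m z2 (i z3) * (m ξ (m (m a z1) (i z3)))⁻¹) (m ξ (m (m b z2) (i z3))),
        hbrace ξ (m z2 (i z3)) ((m ξ (m (m a z1) (i z3)))⁻¹),
        hmneg, hmneg]
    group
  rw [hEs, hEC, hEfA2]
  exact word_id ξ (m ξ (m z2 (i z3))) (m z2 (i z3)) (m ξ (m (m a z1) (i z3)))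
    (m ξ (m ξ (m (m a z1) (i z3)))) (m ξ (m ξ (m (m b z2) (i z3)))) (m ξ (m ξ c))
    (m ξ (m (m b z2) (i z3))) (m (m a z1) (i z3)) hF hcw2


lemma key_inv
    (hassoc : ∀ x y z, m (m x y) z = m x (m y z))
    (honer : ∀ x, m x 1 = x) (honel : ∀ x, m 1 x = x)
    (hinvr : ∀ x, m x (i x) = 1) (hinvl : ∀ x, m (i x) x = 1)
    (hbrace : ∀ x y z, m x (y * z) = m x y * x⁻¹ * m x z)
    (zi zj a : G) :
    Function.LeftInverse (trigInv m i ξ zi zj a) (trig m i ξ zi zj a) ∧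
    Function.RightInverse (trigInv m i ξ zi zj a) (trig m i ξ zi zj a) := by
  have hmneg := hmneg_of m hbrace honer
  have hEi : ∀ x, m (i ξ) (m ξ x) = x := fun x => by rw [← hassoc, hinvl, honel]
  have hEr : ∀ x, m ξ (m (i ξ) x) = x := fun x => by rw [← hassoc, hinvr, honel]
  have hP : m (m (m ξ a) zi) (i zj) = m ξ (m (m a zi) (i zj)) := by
    rw [hassoc ξ a zi, hassoc]
  have hP' : m (m (m (i ξ) a) zi) (i zj) = m (i ξ) (m (m a zi) (i zj)) := by
    rw [hassoc (i ξ) a zi, hassoc]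
  constructor
  · intro b
    simp only [trig, trigInv, hP, hP']
    rw [hbrace, hbrace, hmneg, hEi, hEi]
    group
  · intro b
    simp only [trig, trigInv, hP, hP']
    rw [hbrace, hbrace, hbrace, hbrace, hmneg, hmneg, hEr, hEr, hinvr]
    group


end Abstract
theorem skew_brace_p_rack (B : SkewBrace X) (Y : Set X) (ξ : X)
    (hdist : ∀ a b : X, ∀ z ∈ Y,
      B.mul (B.add a b) z = B.add (B.add (B.mul a z) (B.neg z)) (B.mul b z))
    (hcent : ∀ z ∈ Y, ∀ a : X, B.add z a = B.add a z) :
    -- parametric self-distributivity with parameters in Y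
    (∀ z1 ∈ Y, ∀ z2 ∈ Y, ∀ z3 ∈ Y, ∀ a b c : X,
        tri B ξ z1 z3 a (tri B ξ z2 z3 b c) =
          tri B ξ z2 z3 (tri B ξ z1 z2 a b) (tri B ξ z1 z3 a c)) ∧
    -- each map `b ↦ a ▷_{(z_i,z_j)} b` is a bijection with the stated inverse
    (∀ zi ∈ Y, ∀ zj ∈ Y, ∀ a : X,
        Function.Bijective (tri B ξ zi zj a) ∧
        Function.LeftInverse (triInv B ξ zi zj a) (tri B ξ zi zj a) ∧
        Function.RightInverse (triInv B ξ zi zj a) (tri B ξ zi zj a)) ∧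
    -- R is a solution of the parametric set-theoretic YBE with parameters in Y
    (∀ z1 ∈ Y, ∀ z2 ∈ Y, ∀ z3 ∈ Y,
        R12 (Rmap B ξ z1 z2) ∘ R13 (Rmap B ξ z1 z3) ∘ R23 (Rmap B ξ z2 z3) =
          R23 (Rmap B ξ z2 z3) ∘ R13 (Rmap B ξ z1 z3) ∘ R12 (Rmap B ξ z1 z2)) ∧
    -- R is invertible
    (∀ zi ∈ Y, ∀ zj ∈ Y, Function.Bijective (Rmap B ξ zi zj)) := by
  letI : Group X := addGroup B
  have honer : ∀ x : X, B.mul x 1 = x := fun x => by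
    have h1 : (1 : X) = B.one := B.zero_eq_one
    rw [h1]; exact B.mul_one x
  have honel : ∀ x : X, B.mul 1 x = x := fun x => by
    have h1 : (1 : X) = B.one := B.zero_eq_one
    rw [h1]; exact B.one_mul x
  have hinvr : ∀ x : X, B.mul x (B.inv x) = 1 :=
    fun x => (B.mul_inv x).trans B.zero_eq_one.symm
  have hinvl : ∀ x : X, B.mul (B.inv x) x = 1 :=
    fun x => (B.inv_mul x).trans B.zero_eq_one.symm
  have hbrace : ∀ x y z : X, B.mul x (y * z) = B.mul x y * x⁻¹ * B.mul x z := B.brace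
  have sd : ∀ z1 ∈ Y, ∀ z2 ∈ Y, ∀ z3 ∈ Y, ∀ a b c : X,
      tri B ξ z1 z3 a (tri B ξ z2 z3 b c)
        = tri B ξ z2 z3 (tri B ξ z1 z2 a b) (tri B ξ z1 z3 a c) := by
    intro z1 h1 z2 h2 z3 h3 a b c
    exact key_selfdist B.mul B.inv ξ B.mul_assoc honer honel hinvr hinvl hbrace z1 z2 z3
      (fun x y => hdist x y z2 h2) (fun x y => hdist x y z3 h3) (hcent z2 h2) (hcent z3 h3) a b c
  have inv : ∀ zi zj a : X,
      Function.LeftInverse (triInv B ξ zi zj a) (tri B ξ zi zj a) ∧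
      Function.RightInverse (triInv B ξ zi zj a) (tri B ξ zi zj a) :=
    fun zi zj a => key_inv B.mul B.inv ξ B.mul_assoc honer honel hinvr hinvl hbrace zi zj a
  refine ⟨sd, ?_, ?_, ?_⟩
  · intro zi _ zj _ a
    exact ⟨⟨(inv zi zj a).1.injective, (inv zi zj a).2.surjective⟩,
      (inv zi zj a).1, (inv zi zj a).2⟩
  · intro z1 h1 z2 h2 z3 h3
    funext p
    obtain ⟨a, b, c⟩ := p
    simp only [Function.comp_apply, R12, R13, R23, Rmap]
    exact congrArg (fun t => (a, tri B ξ z1 z2 a b, t)) (sd z1 h1 z2 h2 z3 h3 a b c)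
  · intro zi _ zj _
    refine Function.bijective_iff_has_inverse.mpr
      ⟨fun p => (p.1, triInv B ξ zi zj p.1 p.2), ?_, ?_⟩
    · intro p
      show (p.1, triInv B ξ zi zj p.1 (tri B ξ zi zj p.1 p.2)) = p
      rw [(inv zi zj p.1).1 p.2]
    · intro p
      show (p.1, tri B ξ zi zj p.1 (triInv B ξ zi zj p.1 p.2)) = p
      rw [(inv zi zj p.1).2 p.2]


end Stmt2
end

section
/- Let X be a nonempty set, Z a parameter set, σ_a^{(u,v)}, τ_a^{(u,v)} : X → X families of maps with every σ_a^{(u,v)} bijective, and R^{(u,v)}(b,a) = (σ_a^{(u,v)}(b), τ_b^{(u,v)}(a)). Let ▷_{(u,v)} be a family of binary operations on X and S^{(u,v)}(x,y) = (x, x ▷_{(u,v)} y). Assume that for all a,b ∈ X and u,v ∈ Z: τ_b^{(u,v)}(a) = (σ^{(v,u)}_{σ^{(u,v)}_a(b)})⁻¹(σ^{(u,v)}_a(b) ▷_{(u,v)} a). Then for the twist φ^{(u,v)}(x,y) := (x, σ^{(v,u)}_x(y)) one has, for all a,b ∈ X and u,v ∈ Z: φ^{(u,v)}(R^{(u,v)}(b,a))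 = S^{(u,v)}(σ^{(u,v)}_a(b), a); that is, R^{(u,v)} is Drinfel'd-equivalent to the shelf-type map S^{(u,v)} via the bijective twist φ. -/
namespace Stmt3

variable {X Z : Type*}

/-- `σ u v a b = σ_a^{(u,v)}(b)`, `σinv u v a` is a two-sided inverse of `σ u v a`,
`τ u v b a = τ_b^{(u,v)}(a)`, and `tri u v x y = x ▷_{(u,v)} y`.
If `τ_b^{(u,v)}(a) = (σ^{(v,u)}_{σ^{(u,v)}_a(b)})⁻¹(σ^{(u,v)}_a(b) ▷_{(u,v)} a)`, then
the twist `φ^{(u,v)}(x,y) = (x, σ^{(v,u)}_x(y))` satisfies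
`φ^{(u,v)}(R^{(u,v)}(b,a)) = S^{(u,v)}(σ^{(u,v)}_a(b), a)`. -/
theorem twist_of_lnd_solution [Nonempty X]
    (σ σinv τ tri : Z → Z → X → X → X)
    (hinv1 : ∀ (u v : Z) (a b : X), σinv u v a (σ u v a b) = b)
    (hinv2 : ∀ (u v : Z) (a b : X), σ u v a (σinv u v a b) = b)
    (hτ : ∀ (u v : Z) (a b : X),
      τ u v b a = σinv v u (σ u v a b) (tri u v (σ u v a b) a)) :
    ∀ (u v : Z) (a b : X),
      (fun p : X × X => (p.1, σ v u p.1 p.2))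
          ((fun p : X × X => (σ u v p.2 p.1, τ u v p.1 p.2)) (b, a)) =
        (fun p : X × X => (p.1, tri u v p.1 p.2)) (σ u v a b, a) := by
  intro u v a b
  simp only []
  rw [hτ, hinv2]

end Stmt3
end

section
/- Let X be a nonempty set, Z a parameter set, ▷_{(u,v)} a p-shelf structure on X, and σ_a^{(u,v)} : X → X a family of bijections indexed by a ∈ X, (u,v) ∈ Z × Z. Define R^{(u,v)}(b,a) := (σ_a^{(u,v)}(b), (σ^{(v,u)}_{σ_a^{(u,v)}(b)})⁻¹(σ_a^{(u,v)}(b) ▷_{(u,v)} a)). Then R is a solution of the parametric set-theoretic Yang–Baxter equation if and only if σ is an admissible twist for ▷, i.e. with τ_b^{(u,v)}(a) := (σ^{(v,u)}_{σ^{(u,v)}_a(b)})⁻¹(σ^{(u,v)}_a(b) ▷_{(u,v)} a), for all a,b,c ∈ X and z₁,z₂,z₃ ∈ Z: (1) σ^{(z₁,z₃)}_a(σ^{(z₁,z₂)}_b(c)) = σ^{(z₁,z₂)}_{σ^{(z₂,z₃)}_a(b)}(σ^{(z₁,z₃)}_{τ^{(z₂,z₃)}_b(a)}(c)) and (2) σ^{(z₁,z₃)}_c(b)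 ▷_{(z₁,z₂)} σ^{(z₂,z₃)}_c(a) = σ^{(z₂,z₃)}_c(b ▷_{(z₁,z₂)} a). -/
namespace Stmt4

variable {X Z : Type*}

def R12 (R : X × X → X × X) : X × X × X → X × X × X :=
  fun p => ((R (p.1, p.2.1)).1, (R (p.1, p.2.1)).2, p.2.2)

def R23 (R : X × X → X × X) : X × X × X → X × X × X :=
  fun p => (p.1, R p.2)

def R13 (R : X × X → X × X) : X × X × X → X × X × X :=
  fun p => ((R (p.1, p.2.2)).1, p.2.1, (R (p.1, p.2.2)).2)

def IsPYBE (R : Z → Z → X × X → X × X) : Prop :=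
  ∀ z1 z2 z3 : Z,
    R12 (R z1 z2) ∘ R13 (R z1 z3) ∘ R23 (R z2 z3) =
      R23 (R z2 z3) ∘ R13 (R z1 z3) ∘ R12 (R z1 z2)

/-- `τ_b^{(u,v)}(a) := (σ^{(v,u)}_{σ^{(u,v)}_a(b)})⁻¹(σ^{(u,v)}_a(b) ▷_{(u,v)} a)`. -/
def tau (σ σinv tri : Z → Z → X → X → X) (u v : Z) (b a : X) : X :=
  σinv v u (σ u v a b) (tri u v (σ u v a b) a)

/-- `R^{(u,v)}(b,a) = (σ_a^{(u,v)}(b), τ_b^{(u,v)}(a))`. -/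
def Rfam (σ σinv tri : Z → Z → X → X → X) (u v : Z) : X × X → X × X :=
  fun p => (σ u v p.2 p.1, tau σ σinv tri u v p.1 p.2)

/-- Injectivity of `σ u v a` from its left inverse. -/
theorem sigma_inj (σ σinv : Z → Z → X → X → X)
    (hinv1 : ∀ (u v : Z) (a b : X), σinv u v a (σ u v a b) = b)
    {u v : Z} {a b c : X} (h : σ u v a b = σ u v a c) : b = c := by
  have := congrArg (σinv u v a) h
  rwa [hinv1, hinv1] at this

/-- The chain identity: a consequence of condition (1) alone. -/
theorem chain (tri σ σinv : Z → Z → X → X → X)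
    (hinv2 : ∀ (u v : Z) (a b : X), σ u v a (σinv u v a b) = b)
    (h1 : ∀ (a b c : X) (z1 z2 z3 : Z),
        σ z1 z3 a (σ z1 z2 b c) =
          σ z1 z2 (σ z2 z3 a b) (σ z1 z3 (tau σ σinv tri z2 z3 b a) c))
    (x y z : X) (z1 z2 z3 : Z) :
    σ z2 z1 (σ z1 z3 z (σ z1 z2 y x))
        (σ z2 z3 (tau σ σinv tri z1 z3 (σ z1 z2 y x) z) (tau σ σinv tri z1 z2 x y)) =
      σ z2 z3 z (tri z1 z2 (σ z1 z2 y x) y) := by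
  have key := h1 z (σ z1 z2 y x) (tau σ σinv tri z1 z2 x y) z2 z1 z3
  have hs : σ z2 z1 (σ z1 z2 y x) (tau σ σinv tri z1 z2 x y)
      = tri z1 z2 (σ z1 z2 y x) y := by
    simp only [tau, hinv2]
  rw [hs] at key
  exact key.symm

/-- The three component equations of the parametric YBE, derived from the
admissible-twist conditions. -/
theorem components (tri σ σinv : Z → Z → X → X → X)
    (hshelf : ∀ (a b c : X) (z1 z2 z3 : Z),
      tri z1 z3 a (tri z2 z3 b c) = tri z2 z3 (tri z1 z2 a b) (tri z1 z3 a c))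
    (hinv1 : ∀ (u v : Z) (a b : X), σinv u v a (σ u v a b) = b)
    (hinv2 : ∀ (u v : Z) (a b : X), σ u v a (σinv u v a b) = b)
    (h1 : ∀ (a b c : X) (z1 z2 z3 : Z),
        σ z1 z3 a (σ z1 z2 b c) =
          σ z1 z2 (σ z2 z3 a b) (σ z1 z3 (tau σ σinv tri z2 z3 b a) c))
    (h2 : ∀ (a b c : X) (z1 z2 z3 : Z),
        tri z1 z2 (σ z1 z3 c b) (σ z2 z3 c a) = σ z2 z3 c (tri z1 z2 b a))
    (z1 z2 z3 : Z) (x y z : X) :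
    (σ z1 z2 (σ z2 z3 z y) (σ z1 z3 (tau σ σinv tri z2 z3 y z) x)
        = σ z1 z3 z (σ z1 z2 y x)) ∧
      (tau σ σinv tri z1 z2 (σ z1 z3 (tau σ σinv tri z2 z3 y z) x) (σ z2 z3 z y) =
        σ z2 z3 (tau σ σinv tri z1 z3 (σ z1 z2 y x) z) (tau σ σinv tri z1 z2 x y)) ∧
      (tau σ σinv tri z1 z3 x (tau σ σinv tri z2 z3 y z) =
        tau σ σinv tri z2 z3 (tau σ σinv tri z1 z2 x y)
          (tau σ σinv tri z1 z3 (σ z1 z2 y x) z)) := by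
  set A := σ z1 z2 y x with hA
  set C := σ z1 z3 z A with hC
  set Y := σ z2 z3 z y with hY
  set t := tau σ σinv tri z2 z3 y z with ht
  set B := σ z1 z3 t x with hB
  set D := tau σ σinv tri z1 z3 A z with hD
  set s := tau σ σinv tri z1 z2 x y with hs
  set G := σ z2 z3 D s with hG
  have f1 : σ z1 z2 Y B = C := (h1 z y x z1 z2 z3).symm
  have f2 : σ z2 z1 C G = tri z1 z2 C Y := by
    have ch := chain tri σ σinv hinv2 h1 x y z z1 z2 z3
    exact ch.trans (h2 y A z z1 z2 z3).symm
  have f3 : G = σinv z2 z1 C (tri z1 z2 C Y) := by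
    have := congrArg (σinv z2 z1 C) f2
    rwa [hinv1] at this
  have f4 : tau σ σinv tri z1 z2 B Y = G := by
    show σinv z2 z1 (σ z1 z2 Y B) (tri z1 z2 (σ z1 z2 Y B) Y) = G
    rw [f1, f3]
  refine ⟨f1, f4, ?_⟩
  -- E3
  set u := σinv z3 z1 B (tri z1 z3 B t) with hu
  have g2 : σ z3 z1 B u = tri z1 z3 B t := hinv2 _ _ _ _
  have g3 : σ z3 z2 Y t = tri z2 z3 Y z := hinv2 _ _ _ _
  have g4 : σ z3 z1 C D = tri z1 z3 C z := hinv2 _ _ _ _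
  have key := h1 Y B u z3 z1 z2
  rw [g2, f1, f4] at key
  -- key : σ z3 z2 Y (tri z1 z3 B t) = σ z3 z1 C (σ z3 z2 G u)
  have k2 := h2 t B Y z1 z3 z2
  rw [f1, g3] at k2
  -- k2 : tri z1 z3 C (tri z2 z3 Y z) = σ z3 z2 Y (tri z1 z3 B t)
  have k3 := hshelf C Y z z1 z2 z3
  have k4 := h2 D G C z2 z3 z1
  rw [f2, g4] at k4
  -- k4 : tri z2 z3 (tri z1 z2 C Y) (tri z1 z3 C z) = σ z3 z1 C (tri z2 z3 G D)
  have k5 : σ z3 z1 C (σ z3 z2 G u) = σ z3 z1 C (tri z2 z3 G D) :=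
    key.symm.trans (k2.symm.trans (k3.trans k4))
  have k6 : σ z3 z2 G u = tri z2 z3 G D := sigma_inj σ σinv hinv1 k5
  calc tau σ σinv tri z1 z3 x t = u := rfl
    _ = σinv z3 z2 G (σ z3 z2 G u) := (hinv1 _ _ _ _).symm
    _ = σinv z3 z2 G (tri z2 z3 G D) := by rw [k6]
    _ = tau σ σinv tri z2 z3 s D := rfl

theorem solution_iff_admissible_twist [Nonempty X]
    (tri σ σinv : Z → Z → X → X → X)
    (hshelf : ∀ (a b c : X) (z1 z2 z3 : Z),
      tri z1 z3 a (tri z2 z3 b c) = tri z2 z3 (tri z1 z2 a b) (tri z1 z3 a c))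
    (hinv1 : ∀ (u v : Z) (a b : X), σinv u v a (σ u v a b) = b)
    (hinv2 : ∀ (u v : Z) (a b : X), σ u v a (σinv u v a b) = b) :
    IsPYBE (Rfam σ σinv tri) ↔
      ((∀ (a b c : X) (z1 z2 z3 : Z),
          σ z1 z3 a (σ z1 z2 b c) =
            σ z1 z2 (σ z2 z3 a b) (σ z1 z3 (tau σ σinv tri z2 z3 b a) c)) ∧
        (∀ (a b c : X) (z1 z2 z3 : Z),
          tri z1 z2 (σ z1 z3 c b) (σ z2 z3 c a) = σ z2 z3 c (tri z1 z2 b a))) := by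
  constructor
  · intro h
    have comp : ∀ (z1 z2 z3 : Z) (x y z : X),
        (σ z1 z2 (σ z2 z3 z y) (σ z1 z3 (tau σ σinv tri z2 z3 y z) x)
            = σ z1 z3 z (σ z1 z2 y x)) ∧
          (tau σ σinv tri z1 z2 (σ z1 z3 (tau σ σinv tri z2 z3 y z) x) (σ z2 z3 z y) =
            σ z2 z3 (tau σ σinv tri z1 z3 (σ z1 z2 y x) z) (tau σ σinv tri z1 z2 x y)) ∧
          (tau σ σinv tri z1 z3 x (tau σ σinv tri z2 z3 y z) =
            tau σ σinv tri z2 z3 (tau σ σinv tri z1 z2 x y)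
              (tau σ σinv tri z1 z3 (σ z1 z2 y x) z)) := by
      intro z1 z2 z3 x y z
      have := congrFun (h z1 z2 z3) (x, y, z)
      simpa only [Function.comp_apply, R12, R13, R23, Rfam, Prod.mk.injEq] using this
    have h1 : ∀ (a b c : X) (z1 z2 z3 : Z),
        σ z1 z3 a (σ z1 z2 b c) =
          σ z1 z2 (σ z2 z3 a b) (σ z1 z3 (tau σ σinv tri z2 z3 b a) c) :=
      fun a b c z1 z2 z3 => ((comp z1 z2 z3 c b a).1).symm
    refine ⟨h1, fun a b c z1 z2 z3 => ?_⟩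
    obtain ⟨e1, e2, -⟩ := comp z1 z2 z3 (σinv z1 z2 a b) a c
    rw [hinv2] at e1 e2
    -- e1 : σ z1 z2 (σ z2 z3 c a) (σ z1 z3 (tau z2 z3 a c) x) = σ z1 z3 c b
    have ch := chain tri σ σinv hinv2 h1 (σinv z1 z2 a b) a c z1 z2 z3
    rw [hinv2] at ch
    -- ch : σ z2 z1 (σ z1 z3 c b) (σ z2 z3 (tau z1 z3 b c) (tau z1 z2 x a)) = σ z2 z3 c (tri z1 z2 b a)
    have lhs : tau σ σinv tri z1 z2 (σ z1 z3 (tau σ σinv tri z2 z3 a c) (σinv z1 z2 a b))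
        (σ z2 z3 c a)
        = σinv z2 z1 (σ z1 z3 c b) (tri z1 z2 (σ z1 z3 c b) (σ z2 z3 c a)) := by
      show σinv z2 z1 (σ z1 z2 (σ z2 z3 c a) (σ z1 z3 (tau σ σinv tri z2 z3 a c) (σinv z1 z2 a b)))
        (tri z1 z2 (σ z1 z2 (σ z2 z3 c a) (σ z1 z3 (tau σ σinv tri z2 z3 a c) (σinv z1 z2 a b)))
          (σ z2 z3 c a)) = _
      rw [e1]
    rw [← ch, ← e2, lhs, hinv2]
  · rintro ⟨h1, h2⟩ z1 z2 z3
    funext p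
    obtain ⟨x, y, z⟩ := p
    simp only [Function.comp_apply, R12, R13, R23, Rfam, Prod.mk.injEq]
    exact components tri σ σinv hshelf hinv1 hinv2 h1 h2 z1 z2 z3 x y z

end Stmt4
end

section
/- Let X be a nonempty set, Z a parameter set, and let R^{(u,v)}(b,a) = (σ_a^{(u,v)}(b), τ_b^{(u,v)}(a)) be a left non-degenerate solution of the parametric set-theoretic Yang–Baxter equation (every σ_a^{(u,v)} bijective). Define a ▷_{(u,v)} b := σ^{(v,u)}_a(τ^{(u,v)}_{(σ^{(u,v)}_b)⁻¹(a)}(b)). Then ▷ is a p-shelf structure on X (it satisfies parametric self-distributivity) and σ is an admissible twist for ▷: for all a,b,c ∈ X and z₁,z₂,z₃ ∈ Z, (1) σ^{(z₁,z₃)}_a(σ^{(z₁,z₂)}_b(c)) = σ^{(z₁,z₂)}_{σ^{(z₂,z₃)}_a(b)}(σ^{(z₁,z₃)}_{τ^{(z₂,z₃)}_b(a)}(c)) and (2) σ^{(z₁,z₃)}_c(b) ▷_{(z₁,z₂)} σ^{(z₂,z₃)}_c(a) = σ^{(z₂,z₃)}_c(b ▷_{(z₁,z₂)} a). -/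
namespace Stmt5

variable {X Z : Type*}

def R12 (R : X × X → X × X) : X × X × X → X × X × X :=
  fun p => ((R (p.1, p.2.1)).1, (R (p.1, p.2.1)).2, p.2.2)

def R23 (R : X × X → X × X) : X × X × X → X × X × X :=
  fun p => (p.1, R p.2)

def R13 (R : X × X → X × X) : X × X × X → X × X × X :=
  fun p => ((R (p.1, p.2.2)).1, p.2.1, (R (p.1, p.2.2)).2)

def IsPYBE (R : Z → Z → X × X → X × X) : Prop :=
  ∀ z1 z2 z3 : Z,
    R12 (R z1 z2) ∘ R13 (R z1 z3) ∘ R23 (R z2 z3) =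
      R23 (R z2 z3) ∘ R13 (R z1 z3) ∘ R12 (R z1 z2)

/-- `a ▷_{(u,v)} b := σ^{(v,u)}_a(τ^{(u,v)}_{(σ^{(u,v)}_b)⁻¹(a)}(b))`. -/
def triOf (σ σinv τ : Z → Z → X → X → X) (u v : Z) (a b : X) : X :=
  σ v u a (τ u v (σinv u v b a) b)

theorem lnd_solution_gives_shelf_and_admissible_twist [Nonempty X]
    (σ σinv τ : Z → Z → X → X → X)
    (hinv1 : ∀ (u v : Z) (a b : X), σinv u v a (σ u v a b) = b)
    (hinv2 : ∀ (u v : Z) (a b : X), σ u v a (σinv u v a b) = b)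
    (hYBE : IsPYBE (fun u v (p : X × X) => (σ u v p.2 p.1, τ u v p.1 p.2))) :
    -- ▷ is a p-shelf structure
    (∀ (a b c : X) (z1 z2 z3 : Z),
        triOf σ σinv τ z1 z3 a (triOf σ σinv τ z2 z3 b c) =
          triOf σ σinv τ z2 z3 (triOf σ σinv τ z1 z2 a b)
            (triOf σ σinv τ z1 z3 a c)) ∧
    -- condition (1) of an admissible twist
    (∀ (a b c : X) (z1 z2 z3 : Z),
        σ z1 z3 a (σ z1 z2 b c) =
          σ z1 z2 (σ z2 z3 a b) (σ z1 z3 (τ z2 z3 b a) c)) ∧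
    -- condition (2) of an admissible twist
    (∀ (a b c : X) (z1 z2 z3 : Z),
        triOf σ σinv τ z1 z2 (σ z1 z3 c b) (σ z2 z3 c a) =
          σ z2 z3 c (triOf σ σinv τ z1 z2 b a)) := by
  -- extract the three componentwise equations of the parametric YBE
  have hE : ∀ (z1 z2 z3 : Z) (x y z : X),
      (σ z1 z2 (σ z2 z3 z y) (σ z1 z3 (τ z2 z3 y z) x) = σ z1 z3 z (σ z1 z2 y x)) ∧
      (τ z1 z2 (σ z1 z3 (τ z2 z3 y z) x) (σ z2 z3 z y)
        = σ z2 z3 (τ z1 z3 (σ z1 z2 y x) z) (τ z1 z2 x y)) ∧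
      (τ z1 z3 x (τ z2 z3 y z) = τ z2 z3 (τ z1 z2 x y) (τ z1 z3 (σ z1 z2 y x) z)) := by
    intro z1 z2 z3 x y z
    have h := congrFun (hYBE z1 z2 z3) (x, y, z)
    simp only [R12, R13, R23, Function.comp_apply, Prod.mk.injEq] at h
    exact ⟨h.1, h.2.1, h.2.2⟩
  have hE1 : ∀ (z1 z2 z3 : Z) (x y z : X),
      σ z1 z2 (σ z2 z3 z y) (σ z1 z3 (τ z2 z3 y z) x) = σ z1 z3 z (σ z1 z2 y x) :=
    fun z1 z2 z3 x y z => (hE z1 z2 z3 x y z).1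
  have hE2 : ∀ (z1 z2 z3 : Z) (x y z : X),
      τ z1 z2 (σ z1 z3 (τ z2 z3 y z) x) (σ z2 z3 z y)
        = σ z2 z3 (τ z1 z3 (σ z1 z2 y x) z) (τ z1 z2 x y) :=
    fun z1 z2 z3 x y z => (hE z1 z2 z3 x y z).2.1
  have hE3 : ∀ (z1 z2 z3 : Z) (x y z : X),
      τ z1 z3 x (τ z2 z3 y z) = τ z2 z3 (τ z1 z2 x y) (τ z1 z3 (σ z1 z2 y x) z) :=
    fun z1 z2 z3 x y z => (hE z1 z2 z3 x y z).2.2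
  -- condition (1)
  have cond1 : ∀ (a b c : X) (z1 z2 z3 : Z),
      σ z1 z3 a (σ z1 z2 b c) =
        σ z1 z2 (σ z2 z3 a b) (σ z1 z3 (τ z2 z3 b a) c) :=
    fun a b c z1 z2 z3 => (hE1 z1 z2 z3 c b a).symm
  -- condition (2)
  have cond2 : ∀ (a b c : X) (z1 z2 z3 : Z),
      triOf σ σinv τ z1 z2 (σ z1 z3 c b) (σ z2 z3 c a) =
        σ z2 z3 c (triOf σ σinv τ z1 z2 b a) := by
    intro a b c z1 z2 z3
    have stepA : σinv z1 z2 (σ z2 z3 c a) (σ z1 z3 c b)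
        = σ z1 z3 (τ z2 z3 a c) (σinv z1 z2 a b) := by
      have h1 := hE1 z1 z2 z3 (σinv z1 z2 a b) a c
      rw [hinv2] at h1
      rw [← h1, hinv1]
    unfold triOf
    rw [stepA]
    have h2 := hE2 z1 z2 z3 (σinv z1 z2 a b) a c
    rw [hinv2] at h2
    rw [h2]
    exact hE1 z2 z1 z3 (τ z1 z2 (σinv z1 z2 a b) a) b c
  -- the p-shelf identity
  have shelf : ∀ (a b c : X) (z1 z2 z3 : Z),
      triOf σ σinv τ z1 z3 a (triOf σ σinv τ z2 z3 b c) =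
        triOf σ σinv τ z2 z3 (triOf σ σinv τ z1 z2 a b)
          (triOf σ σinv τ z1 z3 a c) := by
    intro a b c z1 z2 z3
    set β : X := σinv z2 z3 c b with hβ
    set x : X := σinv z1 z2 β (σinv z1 z3 c a) with hx
    have hb : σ z2 z3 c β = b := hinv2 z2 z3 c b
    have hq : σinv z1 z3 c a = σ z1 z2 β x := (hinv2 z1 z2 β (σinv z1 z3 c a)).symm
    have ha : a = σ z1 z3 c (σ z1 z2 β x) := by rw [← hq, hinv2]
    have haa : a = σ z1 z2 b (σ z1 z3 (τ z2 z3 β c) x) := by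
      rw [ha, ← hb]; exact (hE1 z1 z2 z3 x β c).symm
    have hp : σinv z1 z2 b a = σ z1 z3 (τ z2 z3 β c) x := by
      rw [haa, hinv1]
    -- rewrite the right-hand side using cond2
    have hrhs : triOf σ σinv τ z2 z3 (triOf σ σinv τ z1 z2 a b)
          (triOf σ σinv τ z1 z3 a c)
        = σ z3 z1 a (triOf σ σinv τ z2 z3 (τ z1 z2 (σinv z1 z2 b a) b)
            (τ z1 z3 (σinv z1 z3 c a) c)) := by
      exact cond2 (τ z1 z3 (σinv z1 z3 c a) c) (τ z1 z2 (σinv z1 z2 b a) b) a z2 z3 z1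
    rw [hrhs]
    show σ z3 z1 a (τ z1 z3 (σinv z1 z3 (triOf σ σinv τ z2 z3 b c) a)
        (triOf σ σinv τ z2 z3 b c)) = _
    congr 1
    -- B = triOf z2 z3 b c
    have hB : triOf σ σinv τ z2 z3 b c = σ z3 z2 b (τ z2 z3 β c) := by
      unfold triOf; rw [← hβ]
    -- compute σinv z1 z3 B a
    have hginv : σinv z1 z3 (triOf σ σinv τ z2 z3 b c) a
        = σ z1 z2 (τ z3 z2 (τ z2 z3 β c) b) x := by
      have h1 := hE1 z1 z3 z2 x (τ z2 z3 β c) b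
      -- h1 : σ z1 z3 (σ z3 z2 b (τ z2 z3 β c)) (σ z1 z2 (τ z3 z2 (τ z2 z3 β c) b) x)
      --      = σ z1 z2 b (σ z1 z3 (τ z2 z3 β c) x)
      rw [← haa] at h1
      rw [hB, ← h1, hinv1]
    rw [hginv, hB]
    have h2 := hE2 z1 z3 z2 x (τ z2 z3 β c) b
    -- h2 : τ z1 z3 (σ z1 z2 (τ z3 z2 (τ z2 z3 β c) b) x) (σ z3 z2 b (τ z2 z3 β c))
    --      = σ z3 z2 (τ z1 z2 (σ z1 z3 (τ z2 z3 β c) x) b) (τ z1 z3 x (τ z2 z3 β c))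
    rw [h2]
    -- now compute the right-hand side
    have hBp : τ z1 z2 (σinv z1 z2 b a) b
        = σ z2 z3 (τ z1 z3 (σ z1 z2 β x) c) (τ z1 z2 x β) := by
      rw [hp, ← hb]
      exact hE2 z1 z2 z3 x β c
    rw [hBp, ← hq]
    unfold triOf
    rw [hq, hinv1]
    rw [← hE3 z1 z2 z3 x β c]
    congr 1
    rw [← hb]
    exact hE2 z1 z2 z3 x β c
  exact ⟨shelf, cond1, cond2⟩

end Stmt5
end

section
/- Let X be a nonempty set, Z a parameter set, ▷_{(u,v)} a p-shelf structure on X, and σ_a^{(u,v)} : X → X a family of bijections forming an admissible twist for ▷. Let R^{(u,v)}(b,a) := (σ_a^{(u,v)}(b), (σ^{(v,u)}_{σ_a^{(u,v)}(b)})⁻¹(σ_a^{(u,v)}(b) ▷_{(u,v)} a)) be the resulting left non-degenerate solution of the parametric set-theoretic Yang–Baxter equation. Then R^{(u,v)} : X × X → X × X is bijective for all (u,v) ∈ Z × Z if and only if ▷ is a p-rack structure, i.e. every map b ↦ a ▷_{(u,v)} b is a bijection of X. -/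
namespace Stmt6

variable {X Z : Type*}

/-- `τ_b^{(u,v)}(a) := (σ^{(v,u)}_{σ^{(u,v)}_a(b)})⁻¹(σ^{(u,v)}_a(b) ▷_{(u,v)} a)`. -/
def tau (σ σinv tri : Z → Z → X → X → X) (u v : Z) (b a : X) : X :=
  σinv v u (σ u v a b) (tri u v (σ u v a b) a)

/-- `R^{(u,v)}(b,a) = (σ_a^{(u,v)}(b), τ_b^{(u,v)}(a))`. -/
def Rfam (σ σinv tri : Z → Z → X → X → X) (u v : Z) : X × X → X × X :=
  fun p => (σ u v p.2 p.1, tau σ σinv tri u v p.1 p.2)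

theorem bijective_iff_p_rack [Nonempty X]
    (tri σ σinv : Z → Z → X → X → X)
    (hshelf : ∀ (a b c : X) (z1 z2 z3 : Z),
      tri z1 z3 a (tri z2 z3 b c) = tri z2 z3 (tri z1 z2 a b) (tri z1 z3 a c))
    (hinv1 : ∀ (u v : Z) (a b : X), σinv u v a (σ u v a b) = b)
    (hinv2 : ∀ (u v : Z) (a b : X), σ u v a (σinv u v a b) = b)
    -- admissible twist condition (1)
    (htwist1 : ∀ (a b c : X) (z1 z2 z3 : Z),
      σ z1 z3 a (σ z1 z2 b c) =
        σ z1 z2 (σ z2 z3 a b) (σ z1 z3 (tau σ σinv tri z2 z3 b a) c))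
    -- admissible twist condition (2)
    (htwist2 : ∀ (a b c : X) (z1 z2 z3 : Z),
      tri z1 z2 (σ z1 z3 c b) (σ z2 z3 c a) = σ z2 z3 c (tri z1 z2 b a)) :
    (∀ u v : Z, Function.Bijective (Rfam σ σinv tri u v)) ↔
      (∀ (u v : Z) (a : X), Function.Bijective (tri u v a)) := by
  constructor
  · intro hR u v x
    constructor
    · intro a a' h
      have hx : σ u v a (σinv u v a x) = σ u v a' (σinv u v a' x) := by
        rw [hinv2, hinv2]
      have := (hR u v).1 (a₁ := (σinv u v a x, a)) (a₂ := (σinv u v a' x, a'))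
        (by simp only [Rfam, tau, hinv2, h])
      exact congrArg Prod.snd this
    · intro c
      obtain ⟨⟨b, a⟩, hba⟩ := (hR u v).2 (x, σinv v u x c)
      simp only [Rfam, tau, Prod.mk.injEq] at hba
      obtain ⟨h1, h2⟩ := hba
      refine ⟨a, ?_⟩
      rw [h1] at h2
      have := congrArg (σ v u x) h2
      rw [hinv2, hinv2] at this
      exact this
  · intro htri u v
    constructor
    · rintro ⟨b, a⟩ ⟨b', a'⟩ h
      simp only [Rfam, tau, Prod.mk.injEq] at h
      obtain ⟨h1, h2⟩ := h
      rw [h1] at h2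
      have h3 := congrArg (σ v u (σ u v a' b')) h2
      rw [hinv2, hinv2] at h3
      have ha : a = a' := (htri u v _).1 h3
      subst ha
      have hb : b = b' := by
        have := congrArg (σinv u v a) h1
        rwa [hinv1, hinv1] at this
      exact Prod.ext hb rfl
    · rintro ⟨x, y⟩
      obtain ⟨a, ha⟩ := (htri u v x).2 (σ v u x y)
      refine ⟨(σinv u v a x, a), ?_⟩
      simp only [Rfam, tau, hinv2, ha, hinv1]

end Stmt6
end

section
/- Let (X,+,∘) be a skew brace and Y ⊆ X a subset such that: (i) z ∘ w = w ∘ z for all z,w ∈ Y; (ii) (a+b) ∘ z = a ∘ z − z + b ∘ z for all a,b ∈ X, z ∈ Y; (iii) every z ∈ Y is central in (X,+). Fix ξ ∈ Y which is also central in (X,∘). For z_i,z_j ∈ Y define σ^{(z_i,z_j)}_a(b) := z_i⁻¹ − ξ ∘ a ∘ z_i⁻¹ ∘ z_j + a ∘ b ∘ ξ ∘ z_j, a ▷_{(z_i,z_j)} b := −(ξ ∘ a ∘ z_i ∘ z_j⁻¹) + ξ ∘ b + a ∘ z_i ∘ z_j⁻¹, and τ^{(z_i,z_j)}_b(a) :=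 (σ^{(z_j,z_i)}_{σ^{(z_i,z_j)}_a(b)})⁻¹(σ^{(z_i,z_j)}_a(b) ▷_{(z_i,z_j)} a). Then σ is an admissible twist for ▷: for all a,b,c ∈ X and z_i,z_j,z_k ∈ Y, (1) σ^{(z_i,z_k)}_a(σ^{(z_i,z_j)}_b(c)) = σ^{(z_i,z_j)}_{σ^{(z_j,z_k)}_a(b)}(σ^{(z_i,z_k)}_{τ^{(z_j,z_k)}_b(a)}(c)) and (2) σ^{(z_i,z_k)}_c(b) ▷_{(z_i,z_j)} σ^{(z_j,z_k)}_c(a) = σ^{(z_j,z_k)}_c(b ▷_{(z_i,z_j)} a). -/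
set_option linter.unusedVariables false
set_option linter.unusedSectionVars false
set_option maxHeartbeats 1000000
set_option maxRecDepth 8000

namespace Stmt8

/-- A (left) skew brace. -/
structure SkewBrace (X : Type*) where
  add : X → X → X
  zero : X
  neg : X → X
  mul : X → X → X
  one : X
  inv : X → X
  add_assoc : ∀ a b c, add (add a b) c = add a (add b c)
  zero_add : ∀ a, add zero a = a
  add_zero : ∀ a, add a zero = a
  neg_add : ∀ a, add (neg a) a = zero
  add_neg : ∀ a, add a (neg a) = zero
  mul_assoc : ∀ a b c, mul (mul a b) c = mul a (mul b c)
  one_mul : ∀ a, mul one a = a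
  mul_one : ∀ a, mul a one = a
  inv_mul : ∀ a, mul (inv a) a = one
  mul_inv : ∀ a, mul a (inv a) = one
  zero_eq_one : zero = one
  brace : ∀ a b c, mul a (add b c) = add (add (mul a b) (neg a)) (mul a c)

variable {X : Type*}

/-- `σ^{(z_i,z_j)}_a(b) := z_i⁻¹ − ξ ∘ a ∘ z_i⁻¹ ∘ z_j + a ∘ b ∘ ξ ∘ z_j`. -/
def sig (B : SkewBrace X) (ξ : X) (zi zj a b : X) : X :=
  B.add (B.add (B.inv zi) (B.neg (B.mul (B.mul (B.mul ξ a) (B.inv zi)) zj)))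
    (B.mul (B.mul (B.mul a b) ξ) zj)

/-- `a ▷_{(z_i,z_j)} b := −(ξ ∘ a ∘ z_i ∘ z_j⁻¹) + ξ ∘ b + a ∘ z_i ∘ z_j⁻¹`. -/
def tri (B : SkewBrace X) (ξ : X) (zi zj a b : X) : X :=
  B.add (B.add (B.neg (B.mul (B.mul (B.mul ξ a) zi) (B.inv zj))) (B.mul ξ b))
    (B.mul (B.mul a zi) (B.inv zj))

/-- `τ^{(z_i,z_j)}_b(a)`, expressed via a chosen family of inverses `σinv` of `σ`. -/
def tau (B : SkewBrace X) (ξ : X) (σinv : X → X → X → X → X) (zi zj b a : X) : X :=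
  σinv zj zi (sig B ξ zi zj a b) (tri B ξ zi zj (sig B ξ zi zj a b) a)

section Aux


variable {G : Type*} [Group G] [AddGroup G]

private theorem comm_rule {u v : G} (h : Commute u v) : v * u = u * v := h.symm.eq

private theorem swap_rule {u v : G} (h : Commute u v) (x : G) : v * (u * x) = u * (v * x) := by
  rw [← mul_assoc, h.symm.eq, mul_assoc]

private theorem neg_central {w : G} (hc : ∀ x : G, x + w = w + x) (x : G) : x + -w = -w + x := by
  have h1 : w + (x + -w) = w + (-w + x) := by
    rw [add_neg_cancel_left, ← add_assoc, ← hc x, add_assoc, add_neg_cancel, add_zero]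
  exact add_left_cancel h1

private theorem cmove {w : G} (hc : ∀ x : G, x + w = w + x) (x y : G) :
    x + (w + y) = w + (x + y) := by
  rw [← add_assoc, hc x, add_assoc]

private theorem cmove' {w : G} (hc : ∀ x : G, x + w = w + x) (x y : G) :
    x + (-w + y) = -w + (x + y) := by
  rw [← add_assoc, neg_central hc x, add_assoc]

private theorem czmul {w w' : G} (hcw : ∀ x : G, x + w = w + x) (hcw' : ∀ x : G, x + w' = w' + x)
    (hdw' : ∀ x y : G, (x + y) * w' = x * w' + -w' + y * w') (x : G) :
    x + w * w' = w * w' + x := by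
  have hu : x * w'⁻¹ * w' = x := inv_mul_cancel_right x w'
  have h1 : (x * w'⁻¹ + w) * w' = (w + x * w'⁻¹) * w' := by rw [hcw (x * w'⁻¹)]
  rw [hdw', hdw'] at h1
  calc x + w * w' = x * w'⁻¹ * w' + w * w' := by rw [hu]
    _ = x * w'⁻¹ * w' + (-w' + (w' + w * w')) := by rw [neg_add_cancel_left]
    _ = x * w'⁻¹ * w' + (-w' + (w * w' + w')) := by rw [← hcw' (w * w')]
    _ = (x * w'⁻¹ * w' + -w' + w * w') + w' := by simp only [add_assoc]
    _ = (w * w' + -w' + x * w'⁻¹ * w') + w' := by rw [h1]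
    _ = w * w' + (-w' + (x * w'⁻¹ * w' + w')) := by simp only [add_assoc]
    _ = w * w' + (-w' + (w' + x * w'⁻¹ * w')) := by rw [hcw' (x * w'⁻¹ * w')]
    _ = w * w' + x * w'⁻¹ * w' := by rw [neg_add_cancel_left]
    _ = w * w' + x := by rw [hu]

private theorem negmul {w : G} (h01 : (0 : G) = 1)
    (hd : ∀ x y : G, (x + y) * w = x * w + -w + y * w) (x : G) :
    (-x) * w = w + -(x * w) + w := by
  have h1 := hd x (-x)
  rw [add_neg_cancel, h01, one_mul] at h1
  have h2 : (-x) * w = -(x * w + -w) + w := eq_neg_add_of_add_eq h1.symm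
  rw [neg_add_rev, neg_neg] at h2
  rw [h2, add_assoc]

private theorem dzinv {w : G} (h01 : (0 : G) = 1)
    (hd : ∀ x y : G, (x + y) * w = x * w + -w + y * w) (x y : G) :
    (x + y) * w⁻¹ = x * w⁻¹ + -w⁻¹ + y * w⁻¹ := by
  apply mul_right_cancel (b := w)
  rw [inv_mul_cancel_right, hd, hd, negmul h01 hd, inv_mul_cancel_right, inv_mul_cancel_right,
    inv_mul_cancel, ← h01, neg_zero]
  simp only [add_assoc, add_zero, zero_add, neg_add_cancel_left, add_neg_cancel_left]

private theorem czinv {w : G} (h01 : (0 : G) = 1) (hc : ∀ x : G, x + w = w + x)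
    (hd : ∀ x y : G, (x + y) * w = x * w + -w + y * w) (x : G) :
    x + w⁻¹ = w⁻¹ + x := by
  apply mul_right_cancel (b := w)
  rw [hd, hd, inv_mul_cancel, ← h01, add_zero, zero_add]
  exact neg_central hc (x * w)

private theorem mulneg (hb : ∀ a b c : G, a * (b + c) = a * b + -a + a * c) (h01 : (0 : G) = 1)
    (a b : G) : a * (-b) = a + -(a * b) + a := by
  have h1 := hb a b (-b)
  rw [add_neg_cancel, h01, mul_one] at h1
  have h2 : a * (-b) = -(a * b + -a) + a := eq_neg_add_of_add_eq h1.symm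
  rw [neg_add_rev, neg_neg] at h2
  exact h2

private theorem lamadd (hb : ∀ a b c : G, a * (b + c) = a * b + -a + a * c) (c p q : G) :
    -c + c * (p + q) = (-c + c * p) + (-c + c * q) := by
  rw [hb]
  simp only [add_assoc]

private theorem lamd (hb : ∀ a b c : G, a * (b + c) = a * b + -a + a * c) (h01 : (0 : G) = 1)
    (c u v : G) : -(c * u) + c * v = -c + c * (-u + v) := by
  rw [hb, mulneg hb h01]
  simp only [add_assoc, neg_add_cancel_left, add_neg_cancel_left]

private theorem lamswap (hb : ∀ a b c : G, a * (b + c) = a * b + -a + a * c)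
    (c p q : G) (h : p + q = q + p) :
    (-c + c * p) + (-c + c * q) = (-c + c * q) + (-c + c * p) := by
  rw [← lamadd hb, ← lamadd hb, h]


private theorem cond2_core {G : Type*} [Group G] [AddGroup G]  (zi zj zk ξ a b c : G)
    (hb : ∀ a b c : G, a * (b + c) = a * b + -a + a * c) (h01 : (0:G) = 1)
    (hdi : ∀ x y : G, (x + y) * zi = x * zi + -zi + y * zi)
    (hdj : ∀ x y : G, (x + y) * zj = x * zj + -zj + y * zj)
    (hdk : ∀ x y : G, (x + y) * zk = x * zk + -zk + y * zk)
    (hdx : ∀ x y : G, (x + y) * ξ = x * ξ + -ξ + y * ξ)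
    (hci : ∀ x : G, x + zi = zi + x) (hcj : ∀ x : G, x + zj = zj + x)
    (hck : ∀ x : G, x + zk = zk + x) (hcx : ∀ x : G, x + ξ = ξ + x)
    (cij : Commute zi zj) (cik : Commute zi zk) (cjk : Commute zj zk)
    (hxc : ∀ x : G, ξ * x = x * ξ) :
    -(ξ*(zi⁻¹ + -(ξ*c*zi⁻¹*zk) + c*b*ξ*zk)*zi*zj⁻¹) + ξ*(zj⁻¹ + -(ξ*c*zj⁻¹*zk) + c*a*ξ*zk)
      + (zi⁻¹ + -(ξ*c*zi⁻¹*zk) + c*b*ξ*zk)*zi*zj⁻¹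
    = zj⁻¹ + -(ξ*c*zj⁻¹*zk) + c*(-(ξ*b*zi*zj⁻¹) + ξ*a + b*zi*zj⁻¹)*ξ*zk := by
  -- derived distributivity for inverse letters
  have hdj' := dzinv h01 hdj
  have hdi' := dzinv h01 hdi
  -- neg-mul rules
  have nmi := negmul h01 hdi
  have nmk := negmul h01 hdk
  have nmx := negmul h01 hdx
  have nmj' := negmul h01 hdj'
  -- xi movement
  have xr1 : ∀ y x : G, ξ * (y * x) = y * (ξ * x) := fun y x => by
    rw [← mul_assoc, hxc y, mul_assoc]
  -- sorting rules
  have sji := comm_rule cij      -- zj * zi = zi * zj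
  have sji' := swap_rule cij
  have ski := comm_rule cik
  have ski' := swap_rule cik
  have skj := comm_rule cjk
  have skj' := swap_rule cjk
  have sj'i := comm_rule cij.inv_right    -- zj⁻¹ * zi = zi * zj⁻¹
  have sj'i' := swap_rule cij.inv_right
  have skj2 := comm_rule cjk.inv_left      -- zk * zj⁻¹ = zj⁻¹ * zk
  have skj2' := swap_rule cjk.inv_left
  have ski2 := comm_rule cik.inv_left      -- zk * zi⁻¹ = zi⁻¹ * zk
  have ski2' := swap_rule cik.inv_left
  -- additive units
  have oneadd : ∀ x : G, (1:G) + x = x := fun x => by rw [← h01, zero_add]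
  have addone : ∀ x : G, x + (1:G) = x := fun x => by rw [← h01, add_zero]
  have negone : -(1:G) = 0 := by rw [← h01, neg_zero]
  -- Stage A: expand all products of sums
  simp only [hb, mulneg hb h01, hdi, hdj, hdk, hdx, hdi', hdj', nmi, nmk, nmx, nmj']
  -- Stage B: multiplicative normalization + additive flattening
  simp only [mul_assoc, hxc, xr1, sji, sji', ski, ski', skj, skj', sj'i, sj'i', skj2, skj2',
    ski2, ski2', inv_mul_cancel_left, mul_inv_cancel_left, inv_mul_cancel, mul_inv_cancel,
    one_mul, mul_one, add_assoc, neg_add_rev, neg_neg, neg_add_cancel_left, add_neg_cancel_left,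
    neg_add_cancel, add_neg_cancel, add_zero, zero_add, negone, oneadd, addone]
  -- move central zj⁻¹ to the front
  have czj' : ∀ x : G, x + zj⁻¹ = zj⁻¹ + x := czinv h01 hcj hdj
  simp only [cmove czj']
  congr 1
  -- the lambda-swap argument
  set u₁ := b * (zi * (zj⁻¹ * (zk * (ξ * ξ)))) with hu₁
  set v₁ := a * (zk * (ξ * ξ)) with hv₁
  set u₂ := zj⁻¹ * (zk * ξ) with hu₂
  set v₂ := zk * ξ with hv₂
  set m₁ := b * (zi * (zj⁻¹ * (zk * ξ))) with hm₁
  have czv₂ : ∀ x : G, x + v₂ = v₂ + x := czmul hck hcx hdx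
  have czu₂ : ∀ x : G, x + u₂ = u₂ + x := fun x => by
    rw [hu₂, ← mul_assoc]
    exact czmul (czmul (czinv h01 hcj hdj) hck hdk) hcx hdx x
  have czq : ∀ x : G, x + (-u₂ + v₂) = (-u₂ + v₂) + x := fun x => by
    rw [← add_assoc, neg_central czu₂ x, add_assoc, czv₂ x, ← add_assoc]
  have hsw : (-(c * u₁) + c * v₁) + (-(c * u₂) + c * v₂)
      = (-(c * u₂) + c * v₂) + (-(c * u₁) + c * v₁) := by
    rw [lamd hb h01 c u₁ v₁, lamd hb h01 c u₂ v₂]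
    exact lamswap hb c _ _ (czq _)
  calc -(c * u₁) + (c * v₁ + (-(c * u₂) + c * m₁))
      = (-(c * u₁) + c * v₁) + ((-(c * u₂) + c * v₂) + (-(c * v₂) + c * m₁)) := by
        simp only [add_assoc, add_neg_cancel_left]
    _ = ((-(c * u₁) + c * v₁) + (-(c * u₂) + c * v₂)) + (-(c * v₂) + c * m₁) :=
        (add_assoc _ _ _).symm
    _ = ((-(c * u₂) + c * v₂) + (-(c * u₁) + c * v₁)) + (-(c * v₂) + c * m₁) := by
        rw [hsw]
    _ = -(c * u₂) + (c * v₂ + (-(c * u₁) + (c * v₁ + (-(c * v₂) + c * m₁)))) := by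
        simp only [add_assoc]

private theorem key_core {G : Type*} [Group G] [AddGroup G]  (zi zj zk ξ a b s t : G)
    (hb : ∀ a b c : G, a * (b + c) = a * b + -a + a * c) (h01 : (0:G) = 1)
    (hdi : ∀ x y : G, (x + y) * zi = x * zi + -zi + y * zi)
    (hdj : ∀ x y : G, (x + y) * zj = x * zj + -zj + y * zj)
    (hdk : ∀ x y : G, (x + y) * zk = x * zk + -zk + y * zk)
    (hdx : ∀ x y : G, (x + y) * ξ = x * ξ + -ξ + y * ξ)
    (hci : ∀ x : G, x + zi = zi + x) (hcj : ∀ x : G, x + zj = zj + x)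
    (hck : ∀ x : G, x + zk = zk + x) (hcx : ∀ x : G, x + ξ = ξ + x)
    (cij : Commute zi zj) (cik : Commute zi zk) (cjk : Commute zj zk)
    (hxc : ∀ x : G, ξ * x = x * ξ)
    (hs : s = zj⁻¹ + -(ξ*a*zj⁻¹*zk) + a*b*ξ*zk)
    (heq : zk⁻¹ + -(ξ*s*zk⁻¹*zj) + s*t*ξ*zj = -(ξ*s*zj*zk⁻¹) + ξ*a + s*zj*zk⁻¹) :
    s * t = a * b := by
  have hdj' := dzinv h01 hdj
  have hdk' := dzinv h01 hdk
  have nmj := negmul h01 hdj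
  have nmk := negmul h01 hdk
  have nmx := negmul h01 hdx
  have nmj' := negmul h01 hdj'
  have nmk' := negmul h01 hdk'
  have xr1 : ∀ y x : G, ξ * (y * x) = y * (ξ * x) := fun y x => by
    rw [← mul_assoc, hxc y, mul_assoc]
  have sji := comm_rule cij
  have sji' := swap_rule cij
  have skj := comm_rule cjk
  have skj' := swap_rule cjk
  have sk'j := comm_rule cjk.inv_left.symm   -- zj * zk⁻¹ = ... direction?
  have oneadd : ∀ x : G, (1:G) + x = x := fun x => by rw [← h01, zero_add]
  have addone : ∀ x : G, x + (1:G) = x := fun x => by rw [← h01, add_zero]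
  have negone : -(1:G) = 0 := by rw [← h01, neg_zero]
  have h2 : s*t*ξ*zj = -(zk⁻¹ + -(ξ*s*zk⁻¹*zj)) + (-(ξ*s*zj*zk⁻¹) + ξ*a + s*zj*zk⁻¹) :=
    eq_neg_add_of_add_eq heq
  have h3 : a*b*ξ*zj = -(zk⁻¹ + -(ξ*s*zk⁻¹*zj)) + (-(ξ*s*zj*zk⁻¹) + ξ*a + s*zj*zk⁻¹) := by
    rw [hs]
    simp only [hb, mulneg hb h01, hdi, hdj, hdk, hdx, hdj', hdk', nmj, nmk, nmx, nmj', nmk']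
    simp only [mul_assoc, hxc, xr1, sji, sji', skj, skj',
      comm_rule cjk.inv_left, swap_rule cjk.inv_left,
      comm_rule cjk.inv_right, swap_rule cjk.inv_right,
      comm_rule cjk.inv_left.inv_right, swap_rule cjk.inv_left.inv_right,
      inv_mul_cancel_left, mul_inv_cancel_left, inv_mul_cancel, mul_inv_cancel,
      one_mul, mul_one, add_assoc, neg_add_rev, neg_neg, neg_add_cancel_left,
      add_neg_cancel_left, neg_add_cancel, add_neg_cancel, add_zero, zero_add,
      negone, oneadd, addone]
    have czk' : ∀ x : G, x + zk⁻¹ = zk⁻¹ + x := czinv h01 hck hdk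
    have czkx : ∀ x : G, x + zk⁻¹ * ξ = zk⁻¹ * ξ + x := czmul czk' hcx hdx
    try simp only [cmove czkx, add_assoc, neg_add_cancel_left, add_neg_cancel_left]
    try simp only [cmove' czkx, add_assoc, neg_add_cancel_left, add_neg_cancel_left]
    try simp only [cmove czk', add_assoc, neg_add_cancel_left, add_neg_cancel_left]
    try simp only [cmove' czk', add_assoc, neg_add_cancel_left, add_neg_cancel_left]
  have h4 : s*t*ξ*zj = a*b*ξ*zj := h2.trans h3.symm
  exact mul_right_cancel (mul_right_cancel h4)

private theorem cond1_core {G : Type*} [Group G] [AddGroup G]  (zi zj zk ξ a b c t : G)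
    (hb : ∀ a b c : G, a * (b + c) = a * b + -a + a * c) (h01 : (0:G) = 1)
    (hdi : ∀ x y : G, (x + y) * zi = x * zi + -zi + y * zi)
    (hdj : ∀ x y : G, (x + y) * zj = x * zj + -zj + y * zj)
    (hdk : ∀ x y : G, (x + y) * zk = x * zk + -zk + y * zk)
    (hdx : ∀ x y : G, (x + y) * ξ = x * ξ + -ξ + y * ξ)
    (hci : ∀ x : G, x + zi = zi + x) (hcj : ∀ x : G, x + zj = zj + x)
    (hck : ∀ x : G, x + zk = zk + x) (hcx : ∀ x : G, x + ξ = ξ + x)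
    (cij : Commute zi zj) (cik : Commute zi zk) (cjk : Commute zj zk)
    (hxc : ∀ x : G, ξ * x = x * ξ)
    (hst : (zj⁻¹ + -(ξ*a*zj⁻¹*zk) + a*b*ξ*zk) * t = a * b) :
    zi⁻¹ + -(ξ*a*zi⁻¹*zk) + a*(zi⁻¹ + -(ξ*b*zi⁻¹*zj) + b*c*ξ*zj)*ξ*zk
    = zi⁻¹ + -(ξ*(zj⁻¹ + -(ξ*a*zj⁻¹*zk) + a*b*ξ*zk)*zi⁻¹*zj)
      + (zj⁻¹ + -(ξ*a*zj⁻¹*zk) + a*b*ξ*zk)*(zi⁻¹ + -(ξ*t*zi⁻¹*zk) + t*c*ξ*zk)*ξ*zj := by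
  have hdi' := dzinv h01 hdi
  have hdj' := dzinv h01 hdj
  have hdk' := dzinv h01 hdk
  have nmi := negmul h01 hdi
  have nmj := negmul h01 hdj
  have nmk := negmul h01 hdk
  have nmx := negmul h01 hdx
  have nmi' := negmul h01 hdi'
  have nmj' := negmul h01 hdj'
  have nmk' := negmul h01 hdk'
  have xr1 : ∀ y x : G, ξ * (y * x) = y * (ξ * x) := fun y x => by
    rw [← mul_assoc, hxc y, mul_assoc]
  have oneadd : ∀ x : G, (1:G) + x = x := fun x => by rw [← h01, zero_add]
  have addone : ∀ x : G, x + (1:G) = x := fun x => by rw [← h01, add_zero]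
  have negone : -(1:G) = 0 := by rw [← h01, neg_zero]
  have e1 : (zj⁻¹ + -(ξ*a*zj⁻¹*zk) + a*b*ξ*zk) * (ξ*t*zi⁻¹*zk) = a*(b*(ξ*(zi⁻¹*zk))) := by
    rw [show ξ*t*zi⁻¹*zk = t*(ξ*(zi⁻¹*zk)) from by rw [hxc t]; simp only [mul_assoc],
      ← mul_assoc, hst, mul_assoc]
  have e2 : (zj⁻¹ + -(ξ*a*zj⁻¹*zk) + a*b*ξ*zk) * (t*c*ξ*zk) = a*(b*(c*(ξ*zk))) := by
    rw [show t*c*ξ*zk = t*(c*(ξ*zk)) from by simp only [mul_assoc],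
      ← mul_assoc, hst, mul_assoc]
  have eS : (zj⁻¹ + -(ξ*a*zj⁻¹*zk) + a*b*ξ*zk) * (zi⁻¹ + -(ξ*t*zi⁻¹*zk) + t*c*ξ*zk)
      = (zj⁻¹ + -(ξ*a*zj⁻¹*zk) + a*b*ξ*zk) * zi⁻¹ + -(zj⁻¹ + -(ξ*a*zj⁻¹*zk) + a*b*ξ*zk)
        + ((zj⁻¹ + -(ξ*a*zj⁻¹*zk) + a*b*ξ*zk) + -(a*(b*(ξ*(zi⁻¹*zk))))
            + (zj⁻¹ + -(ξ*a*zj⁻¹*zk) + a*b*ξ*zk))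
        + -(zj⁻¹ + -(ξ*a*zj⁻¹*zk) + a*b*ξ*zk) + a*(b*(c*(ξ*zk))) := by
    rw [hb, hb, mulneg hb h01, e1, e2]
  rw [eS]
  simp only [hb, mulneg hb h01, hdi, hdj, hdk, hdx, hdi', hdj', hdk', nmi, nmj, nmk, nmx,
    nmi', nmj', nmk']
  simp only [mul_assoc, hxc, xr1,
    comm_rule cij, swap_rule cij, comm_rule cik, swap_rule cik, comm_rule cjk, swap_rule cjk,
    comm_rule cij.inv_right, swap_rule cij.inv_right,
    comm_rule cij.inv_left, swap_rule cij.inv_left,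
    comm_rule cij.inv_left.inv_right, swap_rule cij.inv_left.inv_right,
    comm_rule cik.inv_right, swap_rule cik.inv_right,
    comm_rule cik.inv_left, swap_rule cik.inv_left,
    comm_rule cik.inv_left.inv_right, swap_rule cik.inv_left.inv_right,
    comm_rule cjk.inv_right, swap_rule cjk.inv_right,
    comm_rule cjk.inv_left, swap_rule cjk.inv_left,
    comm_rule cjk.inv_left.inv_right, swap_rule cjk.inv_left.inv_right,
    inv_mul_cancel_left, mul_inv_cancel_left, inv_mul_cancel, mul_inv_cancel,
    one_mul, mul_one, add_assoc, neg_add_rev, neg_neg, neg_add_cancel_left,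
    add_neg_cancel_left, neg_add_cancel, add_neg_cancel, add_zero, zero_add,
    negone, oneadd, addone]


end Aux

theorem sigma_admissible_twist (B : SkewBrace X) (Y : Set X) (ξ : X)
    (hcomm : ∀ z ∈ Y, ∀ w ∈ Y, B.mul z w = B.mul w z)
    (hdist : ∀ a b : X, ∀ z ∈ Y,
      B.mul (B.add a b) z = B.add (B.add (B.mul a z) (B.neg z)) (B.mul b z))
    (hcent : ∀ z ∈ Y, ∀ a : X, B.add z a = B.add a z)
    (hξY : ξ ∈ Y)
    (hξc : ∀ a : X, B.mul ξ a = B.mul a ξ) :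
    ∀ σinv : X → X → X → X → X,
      (∀ zi ∈ Y, ∀ zj ∈ Y, ∀ a b : X,
        σinv zi zj a (sig B ξ zi zj a b) = b ∧
        sig B ξ zi zj a (σinv zi zj a b) = b) →
      -- admissible twist condition (1)
      (∀ zi ∈ Y, ∀ zj ∈ Y, ∀ zk ∈ Y, ∀ a b c : X,
        sig B ξ zi zk a (sig B ξ zi zj b c) =
          sig B ξ zi zj (sig B ξ zj zk a b)
            (sig B ξ zi zk (tau B ξ σinv zj zk b a) c)) ∧
      -- admissible twist condition (2)
      (∀ zi ∈ Y, ∀ zj ∈ Y, ∀ zk ∈ Y, ∀ a b c : X,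
        tri B ξ zi zj (sig B ξ zi zk c b) (sig B ξ zj zk c a) =
          sig B ξ zj zk c (tri B ξ zi zj b a)) := by
  letI : Mul X := ⟨B.mul⟩
  letI : One X := ⟨B.one⟩
  letI : Inv X := ⟨B.inv⟩
  letI : Add X := ⟨B.add⟩
  letI : Zero X := ⟨B.zero⟩
  letI : Neg X := ⟨B.neg⟩
  letI : Group X := Group.ofLeftAxioms B.mul_assoc B.one_mul B.inv_mul
  letI : AddGroup X := AddGroup.ofLeftAxioms B.add_assoc B.zero_add B.neg_add
  intro σinv hinv
  have hb : ∀ a b c : X, a * (b + c) = a * b + -a + a * c := B.brace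
  have h01 : (0 : X) = 1 := B.zero_eq_one
  have sig_def : ∀ p q u x : X, sig B ξ p q u x = p⁻¹ + -(ξ*u*p⁻¹*q) + u*x*ξ*q :=
    fun _ _ _ _ => rfl
  have tri_def : ∀ p q u v : X, tri B ξ p q u v = -(ξ*u*p*q⁻¹) + ξ*v + u*p*q⁻¹ :=
    fun _ _ _ _ => rfl
  constructor
  · intro zi hzi zj hzj zk hzk a b c
    have hdi : ∀ x y : X, (x + y) * zi = x * zi + -zi + y * zi := fun x y => hdist x y zi hzi
    have hdj : ∀ x y : X, (x + y) * zj = x * zj + -zj + y * zj := fun x y => hdist x y zj hzj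
    have hdk : ∀ x y : X, (x + y) * zk = x * zk + -zk + y * zk := fun x y => hdist x y zk hzk
    have hdx : ∀ x y : X, (x + y) * ξ = x * ξ + -ξ + y * ξ := fun x y => hdist x y ξ hξY
    have hci : ∀ x : X, x + zi = zi + x := fun x => (hcent zi hzi x).symm
    have hcj : ∀ x : X, x + zj = zj + x := fun x => (hcent zj hzj x).symm
    have hck : ∀ x : X, x + zk = zk + x := fun x => (hcent zk hzk x).symm
    have hcx : ∀ x : X, x + ξ = ξ + x := fun x => (hcent ξ hξY x).symm
    have cij : Commute zi zj := hcomm zi hzi zj hzj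
    have cik : Commute zi zk := hcomm zi hzi zk hzk
    have cjk : Commute zj zk := hcomm zj hzj zk hzk
    have hxc : ∀ x : X, ξ * x = x * ξ := hξc
    have heq : sig B ξ zk zj (sig B ξ zj zk a b) (tau B ξ σinv zj zk b a) =
        tri B ξ zj zk (sig B ξ zj zk a b) a :=
      (hinv zk hzk zj hzj (sig B ξ zj zk a b)
        (tri B ξ zj zk (sig B ξ zj zk a b) a)).2
    rw [sig_def, sig_def, tri_def] at heq
    have hst : (zj⁻¹ + -(ξ*a*zj⁻¹*zk) + a*b*ξ*zk) * (tau B ξ σinv zj zk b a) = a * b :=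
      key_core zi zj zk ξ a b _ _ hb h01 hdi hdj hdk hdx hci hcj hck hcx cij cik cjk hxc
        rfl heq
    rw [sig_def, sig_def, sig_def, sig_def]
    exact cond1_core zi zj zk ξ a b c _ hb h01 hdi hdj hdk hdx hci hcj hck hcx cij cik cjk
      hxc hst
  · intro zi hzi zj hzj zk hzk a b c
    have hdi : ∀ x y : X, (x + y) * zi = x * zi + -zi + y * zi := fun x y => hdist x y zi hzi
    have hdj : ∀ x y : X, (x + y) * zj = x * zj + -zj + y * zj := fun x y => hdist x y zj hzj
    have hdk : ∀ x y : X, (x + y) * zk = x * zk + -zk + y * zk := fun x y => hdist x y zk hzk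
    have hdx : ∀ x y : X, (x + y) * ξ = x * ξ + -ξ + y * ξ := fun x y => hdist x y ξ hξY
    have hci : ∀ x : X, x + zi = zi + x := fun x => (hcent zi hzi x).symm
    have hcj : ∀ x : X, x + zj = zj + x := fun x => (hcent zj hzj x).symm
    have hck : ∀ x : X, x + zk = zk + x := fun x => (hcent zk hzk x).symm
    have hcx : ∀ x : X, x + ξ = ξ + x := fun x => (hcent ξ hξY x).symm
    have cij : Commute zi zj := hcomm zi hzi zj hzj
    have cik : Commute zi zk := hcomm zi hzi zk hzk
    have cjk : Commute zj zk := hcomm zj hzj zk hzk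
    have hxc : ∀ x : X, ξ * x = x * ξ := hξc
    rw [sig_def, sig_def, sig_def, tri_def, tri_def]
    exact cond2_core zi zj zk ξ a b c hb h01 hdi hdj hdk hdx hci hcj hck hcx cij cik cjk hxc

end Stmt8
end

section
/- Let (X,∘) be a group and Z a parameter set. Suppose σ_x^{(u,v)}, τ_x^{(u,v)} : X → X (x ∈ X, (u,v) ∈ Z²) are bijections, and f^{(z₁,z₂,z₃)}_x, g^{(z₁,z₂,z₃)}_x, f̂^{(z₁,z₂,z₃)}_x, ĝ^{(z₁,z₂,z₃)}_x : X → X are bijections satisfying the symmetries f^{(z₁,z₂,z₃)} = f^{(z₁,z₃,z₂)}, g^{(z₁,z₂,z₃)} = g^{(z₁,z₃,z₂)}, f̂^{(z₁,z₂,z₃)} = f̂^{(z₂,z₁,z₃)}, ĝ^{(z₁,z₂,z₃)} = ĝ^{(z₂,z₁,z₃)}, and such that for all x,y,w ∈ X and z₁,z₂,z₃ ∈ Z: (1) x ∘ y = σ^{(z₁,z₂)}_x(y) ∘ τ^{(z₁,z₂)}_y(x); (2) f^{(z₁,z₂,z₃)}_{x∘y}(w) = σ^{(z₁,z₃)}_x(σ^{(z₁,z₂)}_y(w))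 and g^{(z₁,z₂,z₃)}_w(x∘y) = τ^{(z₁,z₃)}_{σ^{(z₁,z₂)}_y(w)}(x) ∘ τ^{(z₁,z₂)}_w(y); (3) f̂^{(z₁,z₂,z₃)}_x(y∘w) = σ^{(z₂,z₃)}_x(y) ∘ σ^{(z₁,z₃)}_{τ^{(z₂,z₃)}_y(x)}(w) and ĝ^{(z₁,z₂,z₃)}_{y∘w}(x) = τ^{(z₁,z₃)}_w(τ^{(z₂,z₃)}_y(x)). Then: (a) the family R^{(u,v)}(y,x) := (σ^{(u,v)}_x(y), τ^{(u,v)}_y(x)) is a solution of the parametric set-theoretic Yang–Baxter equation; (b) x ∘ y = f^{(z₁,z₂,z₃)}_x(y) ∘ g^{(z₁,z₂,z₃)}_y(x) = f̂^{(z₁,z₂,z₃)}_x(y) ∘ ĝ^{(z₁,z₂,z₃)}_y(x) for all x,y ∈ X and z₁,z₂,z₃ ∈ Z. -/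
namespace Stmt9

variable {X Z : Type*}

def R12 (R : X × X → X × X) : X × X × X → X × X × X :=
  fun p => ((R (p.1, p.2.1)).1, (R (p.1, p.2.1)).2, p.2.2)

def R23 (R : X × X → X × X) : X × X × X → X × X × X :=
  fun p => (p.1, R p.2)

def R13 (R : X × X → X × X) : X × X × X → X × X × X :=
  fun p => ((R (p.1, p.2.2)).1, p.2.1, (R (p.1, p.2.2)).2)

def IsPYBE (R : Z → Z → X × X → X × X) : Prop :=
  ∀ z1 z2 z3 : Z,
    R12 (R z1 z2) ∘ R13 (R z1 z3) ∘ R23 (R z2 z3) =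
      R23 (R z2 z3) ∘ R13 (R z1 z3) ∘ R12 (R z1 z2)

/-- p-set Yang–Baxter group: `σ u v x y = σ^{(u,v)}_x(y)`, `τ u v y x = τ^{(u,v)}_y(x)`,
`f z1 z2 z3 x y = f^{(z₁,z₂,z₃)}_x(y)`, etc. -/
theorem p_set_YB_operator_solution [Group X]
    (σ τ : Z → Z → X → X → X)
    (f g fh gh : Z → Z → Z → X → X → X)
    (hσbij : ∀ (u v : Z) (x : X), Function.Bijective (σ u v x))
    (hτbij : ∀ (u v : Z) (x : X), Function.Bijective (τ u v x))
    (hfbij : ∀ (z1 z2 z3 : Z) (x : X), Function.Bijective (f z1 z2 z3 x))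
    (hgbij : ∀ (z1 z2 z3 : Z) (x : X), Function.Bijective (g z1 z2 z3 x))
    (hfhbij : ∀ (z1 z2 z3 : Z) (x : X), Function.Bijective (fh z1 z2 z3 x))
    (hghbij : ∀ (z1 z2 z3 : Z) (x : X), Function.Bijective (gh z1 z2 z3 x))
    (hfsym : ∀ (z1 z2 z3 : Z) (x y : X), f z1 z2 z3 x y = f z1 z3 z2 x y)
    (hgsym : ∀ (z1 z2 z3 : Z) (x y : X), g z1 z2 z3 x y = g z1 z3 z2 x y)
    (hfhsym : ∀ (z1 z2 z3 : Z) (x y : X), fh z1 z2 z3 x y = fh z2 z1 z3 x y)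
    (hghsym : ∀ (z1 z2 z3 : Z) (x y : X), gh z1 z2 z3 x y = gh z2 z1 z3 x y)
    -- (1) x ∘ y = σ^{(z₁,z₂)}_x(y) ∘ τ^{(z₁,z₂)}_y(x)
    (h1 : ∀ (z1 z2 : Z) (x y : X), x * y = σ z1 z2 x y * τ z1 z2 y x)
    -- (2)
    (h2f : ∀ (z1 z2 z3 : Z) (x y w : X),
      f z1 z2 z3 (x * y) w = σ z1 z3 x (σ z1 z2 y w))
    (h2g : ∀ (z1 z2 z3 : Z) (x y w : X),
      g z1 z2 z3 w (x * y) = τ z1 z3 (σ z1 z2 y w) x * τ z1 z2 w y)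
    -- (3)
    (h3f : ∀ (z1 z2 z3 : Z) (x y w : X),
      fh z1 z2 z3 x (y * w) = σ z2 z3 x y * σ z1 z3 (τ z2 z3 y x) w)
    (h3g : ∀ (z1 z2 z3 : Z) (x y w : X),
      gh z1 z2 z3 (y * w) x = τ z1 z3 w (τ z2 z3 y x)) :
    -- (a) R^{(u,v)}(y,x) = (σ^{(u,v)}_x(y), τ^{(u,v)}_y(x)) solves the parametric YBE
    IsPYBE (fun u v (p : X × X) => (σ u v p.2 p.1, τ u v p.1 p.2)) ∧
    -- (b) the factorization identities
    (∀ (z1 z2 z3 : Z) (x y : X),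
      x * y = f z1 z2 z3 x y * g z1 z2 z3 y x ∧
      x * y = fh z1 z2 z3 x y * gh z1 z2 z3 y x) := by
  constructor
  · intro z1 z2 z3
    funext p
    obtain ⟨a, b, c⟩ := p
    have F1 : ∀ x y w : X, σ z1 z3 x (σ z1 z2 y w) = σ z1 z2 x (σ z1 z3 y w) := by
      intro x y w
      rw [← h2f z1 z2 z3 x y w, hfsym, h2f]
    have F4 : ∀ y w x : X, τ z1 z3 w (τ z2 z3 y x) = τ z2 z3 w (τ z1 z3 y x) := by
      intro y w x
      rw [← h3g z1 z2 z3 x y w, hghsym, h3g]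
    have e1 : σ z1 z2 (σ z2 z3 c b) (σ z1 z3 (τ z2 z3 b c) a) =
        σ z1 z3 c (σ z1 z2 b a) := by
      rw [← F1, ← h2f z1 z2 z3 (σ z2 z3 c b) (τ z2 z3 b c) a, ← h1 z2 z3 c b, h2f]
    have e3 : τ z1 z3 a (τ z2 z3 b c) =
        τ z2 z3 (τ z1 z2 a b) (τ z1 z3 (σ z1 z2 b a) c) := by
      rw [← h3g z1 z2 z3 c b a, ← F4,
        ← h3g z1 z2 z3 c (σ z1 z2 b a) (τ z1 z2 a b), ← h1 z1 z2 b a]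
    have e2 : τ z1 z2 (σ z1 z3 (τ z2 z3 b c) a) (σ z2 z3 c b) =
        σ z2 z3 (τ z1 z3 (σ z1 z2 b a) c) (τ z1 z2 a b) := by
      have hP := h1 z1 z2 (σ z2 z3 c b) (σ z1 z3 (τ z2 z3 b c) a)
      rw [e1] at hP
      have hQ := h1 z2 z3 (τ z1 z3 (σ z1 z2 b a) c) (τ z1 z2 a b)
      rw [← e3] at hQ
      have h5 := h1 z1 z3 (τ z2 z3 b c) a
      have h6 := h1 z2 z3 c b
      have h7 := h1 z1 z3 c (σ z1 z2 b a)
      have h8 := h1 z1 z2 b a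
      have hA : σ z1 z3 c (σ z1 z2 b a) *
          (τ z1 z2 (σ z1 z3 (τ z2 z3 b c) a) (σ z2 z3 c b) * τ z1 z3 a (τ z2 z3 b c)) =
          c * (b * a) := by
        rw [← mul_assoc, ← hP, mul_assoc, ← h5, ← mul_assoc, ← h6, mul_assoc]
      have hB : σ z1 z3 c (σ z1 z2 b a) *
          (σ z2 z3 (τ z1 z3 (σ z1 z2 b a) c) (τ z1 z2 a b) * τ z1 z3 a (τ z2 z3 b c)) =
          c * (b * a) := by
        rw [← hQ, ← mul_assoc, ← h7, mul_assoc, ← h8]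
      exact mul_right_cancel (mul_left_cancel (hA.trans hB.symm))
    simp only [R12, R13, R23, Function.comp_apply, Prod.mk.injEq]
    exact ⟨e1, e2, e3⟩
  · intro z1 z2 z3 x y
    constructor
    · have hf := h2f z1 z2 z3 x 1 y
      have hg := h2g z1 z2 z3 x 1 y
      rw [mul_one] at hf hg
      rw [hf, hg, ← mul_assoc, ← h1 z1 z3 x (σ z1 z2 1 y), mul_assoc,
        ← h1 z1 z2 1 y, one_mul]
    · have hf := h3f z1 z2 z3 x y 1
      have hg := h3g z1 z2 z3 x y 1
      rw [mul_one] at hf hg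
      rw [hf, hg, mul_assoc, ← h1 z1 z3 (τ z2 z3 y x) 1, mul_one, ← h1 z2 z3 x y]

end Stmt9
end

section
/- Let X be a nonempty set and Z a parameter set. Suppose •_{(u,v)} : X × X → X is a family of binary operations, τ_y^{(u,v)} : X → X a family of bijections (y ∈ X, (u,v) ∈ Z²), and ĝ^{(z₁,z₂,z₃)}_y : X → X a family of bijections with the symmetry ĝ^{(z₁,z₂,z₃)} = ĝ^{(z₂,z₁,z₃)}, such that for all x,y,w ∈ X and z₁,z₂,z₃ ∈ Z: (1) x •_{(z₂,z₁)} y = y •_{(z₁,z₂)} τ^{(z₁,z₂)}_y(x); and (2) ĝ^{(z₁,z₂,z₃)}_{y •_{(z₂,z₁)} w}(x) = τ^{(z₁,z₃)}_w(τ^{(z₂,z₃)}_y(x)). Then the family of binary operations x ▷_{(u,v)} y := τ^{(u,v)}_x(y) is a p-rack structure (parametric self-distributivity holds and each x ▷_{(u,v)} is bijective), and hence R^{(u,v)}(y,x) := (y, τ^{(u,v)}_y(x)) is an invertible solution of the parametric set-theoretic Yang–Baxter equation. -/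
namespace Stmt10

variable {X Z : Type*}

def R12 (R : X × X → X × X) : X × X × X → X × X × X :=
  fun p => ((R (p.1, p.2.1)).1, (R (p.1, p.2.1)).2, p.2.2)

def R23 (R : X × X → X × X) : X × X × X → X × X × X :=
  fun p => (p.1, R p.2)

def R13 (R : X × X → X × X) : X × X × X → X × X × X :=
  fun p => ((R (p.1, p.2.2)).1, p.2.1, (R (p.1, p.2.2)).2)

def IsPYBE (R : Z → Z → X × X → X × X) : Prop :=
  ∀ z1 z2 z3 : Z,
    R12 (R z1 z2) ∘ R13 (R z1 z3) ∘ R23 (R z2 z3) =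
      R23 (R z2 z3) ∘ R13 (R z1 z3) ∘ R12 (R z1 z2)

/-- p-rack operator coming from a p-rack magma: `bullet u v x y = x •_{(u,v)} y`,
`τ u v y x = τ^{(u,v)}_y(x)`, `gh z1 z2 z3 y x = ĝ^{(z₁,z₂,z₃)}_y(x)`. -/
theorem p_rack_operator_solution [Nonempty X]
    (bullet τ : Z → Z → X → X → X)
    (gh : Z → Z → Z → X → X → X)
    (hτbij : ∀ (u v : Z) (y : X), Function.Bijective (τ u v y))
    (hghbij : ∀ (z1 z2 z3 : Z) (y : X), Function.Bijective (gh z1 z2 z3 y))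
    (hghsym : ∀ (z1 z2 z3 : Z) (y x : X), gh z1 z2 z3 y x = gh z2 z1 z3 y x)
    -- (1) x •_{(z₂,z₁)} y = y •_{(z₁,z₂)} τ^{(z₁,z₂)}_y(x)
    (h1 : ∀ (z1 z2 : Z) (x y : X),
      bullet z2 z1 x y = bullet z1 z2 y (τ z1 z2 y x))
    -- (2) ĝ^{(z₁,z₂,z₃)}_{y •_{(z₂,z₁)} w}(x) = τ^{(z₁,z₃)}_w(τ^{(z₂,z₃)}_y(x))
    (h2 : ∀ (z1 z2 z3 : Z) (x y w : X),
      gh z1 z2 z3 (bullet z2 z1 y w) x = τ z1 z3 w (τ z2 z3 y x)) :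
    -- x ▷_{(u,v)} y := τ^{(u,v)}_x(y) is a p-rack structure
    ((∀ (a b c : X) (z1 z2 z3 : Z),
        τ z1 z3 a (τ z2 z3 b c) = τ z2 z3 (τ z1 z2 a b) (τ z1 z3 a c)) ∧
      (∀ (u v : Z) (x : X), Function.Bijective (τ u v x))) ∧
    -- hence R^{(u,v)}(y,x) := (y, τ^{(u,v)}_y(x)) is an invertible solution
    (IsPYBE (fun u v (p : X × X) => (p.1, τ u v p.1 p.2)) ∧
      ∀ u v : Z,
        Function.Bijective (fun p : X × X => (p.1, τ u v p.1 p.2))) := by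
  have hsd : ∀ (a b c : X) (z1 z2 z3 : Z),
      τ z1 z3 a (τ z2 z3 b c) = τ z2 z3 (τ z1 z2 a b) (τ z1 z3 a c) := by
    intro a b c z1 z2 z3
    have e1 := h2 z1 z2 z3 c b a
    have e2 := h2 z2 z1 z3 c a (τ z1 z2 a b)
    rw [← h1 z1 z2 b a] at e2
    rw [← e1, ← e2]
    exact hghsym z1 z2 z3 _ c
  have hbij : ∀ u v : Z,
      Function.Bijective (fun p : X × X => (p.1, τ u v p.1 p.2)) := by
    intro u v
    constructor
    · rintro ⟨a, x⟩ ⟨b, y⟩ h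
      simp only [Prod.mk.injEq] at h
      obtain ⟨rfl, h2'⟩ := h
      exact Prod.ext rfl ((hτbij u v a).1 h2')
    · rintro ⟨a, y⟩
      obtain ⟨x, hx⟩ := (hτbij u v a).2 y
      exact ⟨(a, x), by simp [hx]⟩
  refine ⟨⟨hsd, fun u v x => hτbij u v x⟩, ?_, hbij⟩
  intro z1 z2 z3
  funext p
  obtain ⟨a, b, c⟩ := p
  simp only [Function.comp_apply, R12, R13, R23]
  exact congrArg _ (congrArg _ (hsd a b c z1 z2 z3))

end Stmt10
end

section
/- Let A be a unital associative ring, X and Z sets, ▷_{(u,v)} : X × X → X an arbitrary family of binary operations, and q : Z × Z → X → A, h : X → A families satisfying the p-shelf algebra relations. Then: (a) for all a,b,c ∈ X and z₁,z₂,z₃ ∈ Z, h_{c ▷_{(z₁,z₃)} (b ▷_{(z₂,z₃)} a)} = h_{(c ▷_{(z₁,z₂)} b) ▷_{(z₂,z₃)} (c ▷_{(z₁,z₃)} a)}; (b) if moreover h is injective (h_a = h_b implies a = b), then ▷ satisfies parametric self-distributivity, i.e. c ▷_{(z₁,z₃)} (b ▷_{(z₂,z₃)} a) = (c ▷_{(z₁,z₂)}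 b) ▷_{(z₂,z₃)} (c ▷_{(z₁,z₃)} a), and every map a ↦ c ▷_{(z₁,z₂)} a is injective. -/
namespace Stmt11

private lemma inv_swap {A : Type*} [Ring A] (P Q R P' Q' R' : A)
    (hPP' : P * P' = 1) (hQQ' : Q * Q' = 1) (hQ'Q : Q' * Q = 1)
    (hR'R : R' * R = 1) (hPQ : P * Q = Q * R) :
    Q' * P' = R' * Q' := by
  have step : (Q' * (P * Q)) * (Q' * P') = Q' := by
    have e : (Q' * (P * Q)) * (Q' * P') = Q' * (P * ((Q * Q') * P')) := by noncomm_ring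
    rw [e, hQQ', one_mul, hPP', mul_one]
  calc Q' * P' = R' * (R * (Q' * P')) := by rw [← mul_assoc, hR'R, one_mul]
    _ = R' * ((Q' * (Q * R)) * (Q' * P')) := by
        rw [← mul_assoc Q' Q R, hQ'Q, one_mul, ← mul_assoc]
    _ = R' * ((Q' * (P * Q)) * (Q' * P')) := by rw [hPQ]
    _ = R' * Q' := by rw [step]

/-- `q u v a = q_a^{(u,v)}`, `h a = h_a`, in a unital associative ring `A`,
satisfying the p-shelf algebra relations for the family of binary operations
`tri u v a b = a ▷_{(u,v)} b`. -/
theorem p_shelf_algebra_self_distributivity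
    {A X Z : Type*} [Ring A]
    (tri : Z → Z → X → X → X)
    (q qinv : Z → Z → X → A) (h : X → A)
    (hq1 : ∀ (u v : Z) (a : X), q u v a * qinv u v a = 1)
    (hq2 : ∀ (u v : Z) (a : X), qinv u v a * q u v a = 1)
    (hqq : ∀ (a b : X) (z1 z2 z3 : Z),
      q z2 z3 a * q z1 z3 b = q z1 z3 b * q z2 z3 (tri z1 z2 b a))
    (hhh : ∀ a b : X, a ≠ b → h a * h b = 0)
    (hqh : ∀ (a b : X) (z1 z2 : Z),
      q z1 z2 b * h (tri z1 z2 b a) = h a * q z1 z2 b) :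
    -- (a)
    (∀ (a b c : X) (z1 z2 z3 : Z),
        h (tri z1 z3 c (tri z2 z3 b a)) =
          h (tri z2 z3 (tri z1 z2 c b) (tri z1 z3 c a))) ∧
    -- (b)
    ((∀ a b : X, h a = h b → a = b) →
      (∀ (a b c : X) (z1 z2 z3 : Z),
          tri z1 z3 c (tri z2 z3 b a) =
            tri z2 z3 (tri z1 z2 c b) (tri z1 z3 c a)) ∧
        (∀ (c : X) (z1 z2 : Z), Function.Injective (tri z1 z2 c))) := by
  -- key formula: h (b ▷ a) = q⁻¹ * h a * q
  have key : ∀ (a b : X) (z1 z2 : Z),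
      h (tri z1 z2 b a) = qinv z1 z2 b * h a * q z1 z2 b := by
    intro a b z1 z2
    calc h (tri z1 z2 b a)
        = qinv z1 z2 b * q z1 z2 b * h (tri z1 z2 b a) := by
          rw [hq2, one_mul]
      _ = qinv z1 z2 b * (q z1 z2 b * h (tri z1 z2 b a)) := by rw [mul_assoc]
      _ = qinv z1 z2 b * (h a * q z1 z2 b) := by rw [hqh]
      _ = qinv z1 z2 b * h a * q z1 z2 b := by rw [mul_assoc]
  -- inverse version of hqq
  have keyinv : ∀ (a b : X) (z1 z2 z3 : Z),
      qinv z1 z3 b * qinv z2 z3 a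
        = qinv z2 z3 (tri z1 z2 b a) * qinv z1 z3 b := by
    intro a b z1 z2 z3
    exact inv_swap (q z2 z3 a) (q z1 z3 b) (q z2 z3 (tri z1 z2 b a))
      (qinv z2 z3 a) (qinv z1 z3 b) (qinv z2 z3 (tri z1 z2 b a))
      (hq1 _ _ _) (hq1 _ _ _) (hq2 _ _ _) (hq2 _ _ _) (hqq a b z1 z2 z3)
  have parta : ∀ (a b c : X) (z1 z2 z3 : Z),
      h (tri z1 z3 c (tri z2 z3 b a)) =
        h (tri z2 z3 (tri z1 z2 c b) (tri z1 z3 c a)) := by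
    intro a b c z1 z2 z3
    calc h (tri z1 z3 c (tri z2 z3 b a))
        = qinv z1 z3 c * (qinv z2 z3 b * h a * q z2 z3 b) * q z1 z3 c := by
          rw [key, key]
      _ = (qinv z1 z3 c * qinv z2 z3 b) * h a * (q z2 z3 b * q z1 z3 c) := by
          noncomm_ring
      _ = (qinv z2 z3 (tri z1 z2 c b) * qinv z1 z3 c) * h a *
            (q z1 z3 c * q z2 z3 (tri z1 z2 c b)) := by
          rw [keyinv, hqq]
      _ = qinv z2 z3 (tri z1 z2 c b) * (qinv z1 z3 c * h a * q z1 z3 c) *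
            q z2 z3 (tri z1 z2 c b) := by noncomm_ring
      _ = h (tri z2 z3 (tri z1 z2 c b) (tri z1 z3 c a)) := by rw [← key, ← key]
  refine ⟨parta, fun hinj => ⟨fun a b c z1 z2 z3 => hinj _ _ (parta a b c z1 z2 z3),
    fun c z1 z2 x y hxy => ?_⟩⟩
  apply hinj
  have e1 : h x * q z1 z2 c = h y * q z1 z2 c := by
    rw [← hqh x c z1 z2, ← hqh y c z1 z2, hxy]
  calc h x = h x * (q z1 z2 c * qinv z1 z2 c) := by rw [hq1, mul_one]
    _ = h x * q z1 z2 c * qinv z1 z2 c := by rw [mul_assoc]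
    _ = h y * q z1 z2 c * qinv z1 z2 c := by rw [e1]
    _ = h y * (q z1 z2 c * qinv z1 z2 c) := by rw [mul_assoc]
    _ = h y := by rw [hq1, mul_one]

end Stmt11
end

section
/- Let A be a unital associative ring, X a finite set, Z a set, ▷_{(u,v)} a p-rack structure on X (parametric self-distributivity and each a ▷_{(u,v)} bijective), and q : Z × Z → X → A, h : X → A families satisfying the p-shelf algebra relations. Set C := Σ_{a∈X} h_a. Then C is central in the subring generated by the q's and h's: C h_b = h_b C and C q_b^{(u,v)} = q_b^{(u,v)} C for all b ∈ X and (u,v) ∈ Z × Z; moreover h_a² = C h_a for all a ∈ X. -/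
namespace Stmt12

/-- Centrality of `C = Σ_a h_a` in the p-rack algebra. -/
theorem C_central
    {A X Z : Type*} [Ring A] [Fintype X]
    (tri : Z → Z → X → X → X)
    -- p-rack structure
    (hsd : ∀ (a b c : X) (z1 z2 z3 : Z),
      tri z1 z3 a (tri z2 z3 b c) = tri z2 z3 (tri z1 z2 a b) (tri z1 z3 a c))
    (hbij : ∀ (u v : Z) (a : X), Function.Bijective (tri u v a))
    -- p-shelf algebra relations
    (q qinv : Z → Z → X → A) (h : X → A)
    (hq1 : ∀ (u v : Z) (a : X), q u v a * qinv u v a = 1)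
    (hq2 : ∀ (u v : Z) (a : X), qinv u v a * q u v a = 1)
    (hqq : ∀ (a b : X) (z1 z2 z3 : Z),
      q z2 z3 a * q z1 z3 b = q z1 z3 b * q z2 z3 (tri z1 z2 b a))
    (hhh : ∀ a b : X, a ≠ b → h a * h b = 0)
    (hqh : ∀ (a b : X) (z1 z2 : Z),
      q z1 z2 b * h (tri z1 z2 b a) = h a * q z1 z2 b) :
    (∀ b : X, (∑ a : X, h a) * h b = h b * ∑ a : X, h a) ∧
    (∀ (b : X) (u v : Z),
      (∑ a : X, h a) * q u v b = q u v b * ∑ a : X, h a) ∧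
    (∀ a : X, h a * h a = (∑ x : X, h x) * h a) := by
  have key : ∀ b : X, (∑ a : X, h a) * h b = h b * h b := by
    intro b
    rw [Finset.sum_mul]
    rw [Finset.sum_eq_single b]
    · intro a _ hab; exact hhh a b hab
    · intro hb; exact absurd (Finset.mem_univ b) hb
  have key2 : ∀ b : X, h b * (∑ a : X, h a) = h b * h b := by
    intro b
    rw [Finset.mul_sum]
    rw [Finset.sum_eq_single b]
    · intro a _ hab; exact hhh b a (Ne.symm hab)
    · intro hb; exact absurd (Finset.mem_univ b) hb
  refine ⟨fun b => by rw [key, key2], fun b u v => ?_, fun a => by rw [key]⟩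
  rw [Finset.sum_mul, Finset.mul_sum]
  rw [← Equiv.sum_comp (Equiv.ofBijective _ (hbij u v b)) (fun a => q u v b * h a)]
  exact Finset.sum_congr rfl fun a _ => (hqh a b u v).symm

end Stmt12
end

section
/- Let A be a unital associative ring, X a finite set, Z a set, ▷_{(u,v)} a p-rack structure on X, and q : Z × Z → X → A, h : X → A families satisfying the p-shelf algebra relations. For u,v ∈ Z set t^{(u,v)} := Σ_{a∈X} q_a^{(u,v)}. Then t^{(z₂,z₃)} t^{(z₁,z₃)} = t^{(z₁,z₃)} t^{(z₂,z₃)} for all z₁,z₂,z₃ ∈ Z. -/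
namespace Stmt13

/-- The elements `t^{(u,v)} := Σ_{a∈X} q_a^{(u,v)}` mutually commute. -/
theorem t_commute
    {A X Z : Type*} [Ring A] [Fintype X]
    (tri : Z → Z → X → X → X)
    -- p-rack structure
    (hsd : ∀ (a b c : X) (z1 z2 z3 : Z),
      tri z1 z3 a (tri z2 z3 b c) = tri z2 z3 (tri z1 z2 a b) (tri z1 z3 a c))
    (hbij : ∀ (u v : Z) (a : X), Function.Bijective (tri u v a))
    -- p-shelf algebra relations
    (q qinv : Z → Z → X → A) (h : X → A)
    (hq1 : ∀ (u v : Z) (a : X), q u v a * qinv u v a = 1)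
    (hq2 : ∀ (u v : Z) (a : X), qinv u v a * q u v a = 1)
    (hqq : ∀ (a b : X) (z1 z2 z3 : Z),
      q z2 z3 a * q z1 z3 b = q z1 z3 b * q z2 z3 (tri z1 z2 b a))
    (hhh : ∀ a b : X, a ≠ b → h a * h b = 0)
    (hqh : ∀ (a b : X) (z1 z2 : Z),
      q z1 z2 b * h (tri z1 z2 b a) = h a * q z1 z2 b) :
    ∀ z1 z2 z3 : Z,
      (∑ a : X, q z2 z3 a) * (∑ a : X, q z1 z3 a) =
        (∑ a : X, q z1 z3 a) * (∑ a : X, q z2 z3 a) := by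
  intro z1 z2 z3
  rw [Finset.sum_mul_sum, Finset.sum_mul_sum, Finset.sum_comm]
  refine Finset.sum_congr rfl fun b _ => ?_
  calc ∑ a : X, q z2 z3 a * q z1 z3 b
      = ∑ a : X, q z1 z3 b * q z2 z3 (tri z1 z2 b a) := by
        exact Finset.sum_congr rfl fun a _ => hqq a b z1 z2 z3
    _ = ∑ a : X, q z1 z3 b * q z2 z3 a := by
        exact Fintype.sum_bijective (tri z1 z2 b) (hbij z1 z2 b) _ _ (fun a => rfl)

end Stmt13
end

section
/- Let k be a commutative ring, Q an associative unital k-algebra, X a finite set, Z a set, ▷_{(u,v)} a p-rack structure on X, and q : Z × Z → X → Q, h : X → Q families satisfying the p-shelf algebra relations. In the k-algebra Q ⊗ₖ Q ⊗ₖ Q set, for z₁,z₂,z₃ ∈ Z, R₁₂^{(z₁,z₂)} := Σ_{a∈X} h_a ⊗ q_a^{(z₁,z₂)} ⊗ 1, R₁₃^{(z₁,z₃)} := Σ_{a∈X} h_a ⊗ 1 ⊗ q_a^{(z₁,z₃)}, R₂₃^{(z₂,z₃)} := Σ_{a∈X} 1 ⊗ h_a ⊗ q_a^{(z₂,z₃)}.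 Then R₁₂^{(z₁,z₂)} · R₁₃^{(z₁,z₃)} · R₂₃^{(z₂,z₃)} = R₂₃^{(z₂,z₃)} · R₁₃^{(z₁,z₃)} · R₁₂^{(z₁,z₂)} for all z₁,z₂,z₃ ∈ Z. Moreover, if Σ_{a∈X} h_a = 1 in Q, then for all u,v ∈ Z the element Σ_{a∈X} h_a ⊗ (q_a^{(u,v)})⁻¹ is a two-sided inverse of R^{(u,v)} := Σ_{a∈X} h_a ⊗ q_a^{(u,v)} in Q ⊗ₖ Q. -/
namespace Stmt14

open TensorProduct

/-- The universal `R`-matrix of the p-rack algebra satisfies the parametric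
Yang–Baxter equation in `Q ⊗ Q ⊗ Q`, and is invertible when `Σ_a h_a = 1`. -/
theorem universal_R_matrix
    {k Q X Z : Type*} [CommRing k] [Ring Q] [Algebra k Q] [Fintype X]
    (tri : Z → Z → X → X → X)
    -- p-rack structure
    (hsd : ∀ (a b c : X) (z1 z2 z3 : Z),
      tri z1 z3 a (tri z2 z3 b c) = tri z2 z3 (tri z1 z2 a b) (tri z1 z3 a c))
    (hbij : ∀ (u v : Z) (a : X), Function.Bijective (tri u v a))
    -- p-shelf algebra relations
    (q qinv : Z → Z → X → Q) (h : X → Q)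
    (hq1 : ∀ (u v : Z) (a : X), q u v a * qinv u v a = 1)
    (hq2 : ∀ (u v : Z) (a : X), qinv u v a * q u v a = 1)
    (hqq : ∀ (a b : X) (z1 z2 z3 : Z),
      q z2 z3 a * q z1 z3 b = q z1 z3 b * q z2 z3 (tri z1 z2 b a))
    (hhh : ∀ a b : X, a ≠ b → h a * h b = 0)
    (hqh : ∀ (a b : X) (z1 z2 : Z),
      q z1 z2 b * h (tri z1 z2 b a) = h a * q z1 z2 b) :
    -- the parametric Yang–Baxter equation in Q ⊗ Q ⊗ Q
    (∀ z1 z2 z3 : Z,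
      (∑ a : X, h a ⊗ₜ[k] (q z1 z2 a ⊗ₜ[k] (1 : Q))) *
          (∑ a : X, h a ⊗ₜ[k] ((1 : Q) ⊗ₜ[k] q z1 z3 a)) *
          (∑ a : X, (1 : Q) ⊗ₜ[k] (h a ⊗ₜ[k] q z2 z3 a)) =
        (∑ a : X, (1 : Q) ⊗ₜ[k] (h a ⊗ₜ[k] q z2 z3 a)) *
          (∑ a : X, h a ⊗ₜ[k] ((1 : Q) ⊗ₜ[k] q z1 z3 a)) *
          (∑ a : X, h a ⊗ₜ[k] (q z1 z2 a ⊗ₜ[k] (1 : Q)))) ∧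
    -- invertibility of R^{(u,v)} in Q ⊗ Q
    ((∑ a : X, h a) = 1 →
      ∀ u v : Z,
        (∑ a : X, h a ⊗ₜ[k] q u v a) * (∑ a : X, h a ⊗ₜ[k] qinv u v a) = 1 ∧
        (∑ a : X, h a ⊗ₜ[k] qinv u v a) * (∑ a : X, h a ⊗ₜ[k] q u v a) = 1) := by
  constructor
  · intro z1 z2 z3
    simp only [Finset.sum_mul, Finset.mul_sum, Algebra.TensorProduct.tmul_mul_tmul,
      one_mul, mul_one]
    calc ∑ c : X, ∑ b : X, ∑ a : X,
          (h a * h b) ⊗ₜ[k] ((q z1 z2 a * h c) ⊗ₜ[k] (q z1 z3 b * q z2 z3 c))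
        = ∑ c : X, ∑ b : X,
          (h b * h b) ⊗ₜ[k] ((q z1 z2 b * h c) ⊗ₜ[k] (q z1 z3 b * q z2 z3 c)) := by
          refine Finset.sum_congr rfl fun c _ => Finset.sum_congr rfl fun b _ => ?_
          rw [Finset.sum_eq_single b]
          · intro a _ ha
            simp [hhh a b ha]
          · intro hmem; exact absurd (Finset.mem_univ b) hmem
      _ = ∑ b : X, ∑ c : X,
          (h b * h b) ⊗ₜ[k] ((h c * q z1 z2 b) ⊗ₜ[k] (q z2 z3 c * q z1 z3 b)) := by
          rw [Finset.sum_comm]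
          refine Finset.sum_congr rfl fun b _ => ?_
          refine (Fintype.sum_bijective (tri z1 z2 b) (hbij z1 z2 b) _ _ fun c => ?_).symm
          rw [hqh c b z1 z2, hqq c b z1 z2 z3]
      _ = ∑ a : X, ∑ b : X, ∑ c : X,
          (h b * h a) ⊗ₜ[k] ((h c * q z1 z2 a) ⊗ₜ[k] (q z2 z3 c * q z1 z3 b)) := by
          refine Finset.sum_congr rfl fun a _ => ?_
          symm
          rw [Finset.sum_eq_single a]
          · intro b _ hb
            simp [hhh b a hb]
          · intro hmem; exact absurd (Finset.mem_univ a) hmem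
  · intro hone u v
    have hsq : ∀ a : X, h a * h a = h a := by
      intro a
      have h1 : ∑ b : X, h a * h b = h a * h a := by
        rw [Finset.sum_eq_single a]
        · intro b _ hb; exact hhh a b (Ne.symm hb)
        · intro hmem; exact absurd (Finset.mem_univ a) hmem
      rw [← h1, ← Finset.mul_sum, hone, mul_one]
    have key : ∀ f g : X → Q, (∀ a, f a * g a = 1) →
        (∑ a : X, h a ⊗ₜ[k] f a) * (∑ a : X, h a ⊗ₜ[k] g a) = 1 := by
      intro f g hfg
      simp only [Finset.sum_mul, Finset.mul_sum, Algebra.TensorProduct.tmul_mul_tmul]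
      calc ∑ b : X, ∑ a : X, (h a * h b) ⊗ₜ[k] (f a * g b)
          = ∑ b : X, h b ⊗ₜ[k] (1 : Q) := by
            refine Finset.sum_congr rfl fun b _ => ?_
            rw [Finset.sum_eq_single b]
            · rw [hsq b, hfg b]
            · intro a _ ha
              simp [hhh a b ha]
            · intro hmem; exact absurd (Finset.mem_univ b) hmem
        _ = 1 := by rw [← TensorProduct.sum_tmul, hone, Algebra.TensorProduct.one_def]
    exact ⟨key _ _ (hq1 u v), key _ _ (hq2 u v)⟩

end Stmt14
end

section
/- Let k be a commutative ring, Q an associative unital k-algebra, X a finite set, Z a set, ▷_{(u,v)} a p-rack structure on X, and q : Z × Z → X → Q, h : X → Q families satisfying the p-shelf algebra relations. For u,v ∈ Z set R^{(u,v)} := Σ_{a∈X} h_a ⊗ q_a^{(u,v)} ∈ Q ⊗ₖ Q. Then for all b ∈ X and z₁,z₂,z₃ ∈ Z, R^{(z₂,z₃)} commutes with the coproduct of the generator q_b: R^{(z₂,z₃)} · (q_b^{(z₁,z₂)} ⊗ q_b^{(z₁,z₃)}) = (q_b^{(z₁,z₂)} ⊗ q_b^{(z₁,z₃)}) · R^{(z₂,z₃)}.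 -/
namespace Stmt15

open TensorProduct

/-- The universal `R`-matrix intertwines the coproduct of the generators `q_b`. -/
theorem R_intertwines_q_coproduct
    {k Q X Z : Type*} [CommRing k] [Ring Q] [Algebra k Q] [Fintype X]
    (tri : Z → Z → X → X → X)
    -- p-rack structure
    (hsd : ∀ (a b c : X) (z1 z2 z3 : Z),
      tri z1 z3 a (tri z2 z3 b c) = tri z2 z3 (tri z1 z2 a b) (tri z1 z3 a c))
    (hbij : ∀ (u v : Z) (a : X), Function.Bijective (tri u v a))
    -- p-shelf algebra relations
    (q qinv : Z → Z → X → Q) (h : X → Q)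
    (hq1 : ∀ (u v : Z) (a : X), q u v a * qinv u v a = 1)
    (hq2 : ∀ (u v : Z) (a : X), qinv u v a * q u v a = 1)
    (hqq : ∀ (a b : X) (z1 z2 z3 : Z),
      q z2 z3 a * q z1 z3 b = q z1 z3 b * q z2 z3 (tri z1 z2 b a))
    (hhh : ∀ a b : X, a ≠ b → h a * h b = 0)
    (hqh : ∀ (a b : X) (z1 z2 : Z),
      q z1 z2 b * h (tri z1 z2 b a) = h a * q z1 z2 b) :
    ∀ (b : X) (z1 z2 z3 : Z),
      (∑ a : X, h a ⊗ₜ[k] q z2 z3 a) * (q z1 z2 b ⊗ₜ[k] q z1 z3 b) =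
        (q z1 z2 b ⊗ₜ[k] q z1 z3 b) * (∑ a : X, h a ⊗ₜ[k] q z2 z3 a) := by
  intro b z1 z2 z3
  rw [Finset.sum_mul, Finset.mul_sum]
  rw [← Equiv.sum_comp (Equiv.ofBijective _ (hbij z1 z2 b)).symm]
  refine Finset.sum_congr rfl fun a _ => ?_
  simp only [Algebra.TensorProduct.tmul_mul_tmul]
  rw [hqq, ← hqh]
  have : tri z1 z2 b ((Equiv.ofBijective _ (hbij z1 z2 b)).symm a) = a :=
    (Equiv.ofBijective _ (hbij z1 z2 b)).apply_symm_apply a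
  simp only [Equiv.ofBijective_symm_apply_apply, this]

end Stmt15
end

section
/- Let k be a commutative ring, Q an associative unital k-algebra, X a finite set, Z a set, ▷_{(u,v)} a p-rack structure on X, and q : Z × Z → X → Q, h : X → Q families satisfying the p-shelf algebra relations. Suppose •_{(u,v)} : X × X → X is a family of binary operations such that a •_{(v,u)} b = b •_{(u,v)} (b ▷_{(u,v)} a) for all a,b ∈ X and u,v ∈ Z. For u,v ∈ Z set R^{(u,v)} := Σ_{a∈X} h_a ⊗ q_a^{(u,v)} ∈ Q ⊗ₖ Q, and for a ∈ X define Δ_{(u,v)}(h_a) := Σ_{(b,c) ∈ X×X, b •_{(u,v)} c = a} h_b ⊗ h_c and Δ^{op}_{(v,u)}(h_a) := Σ_{(b,c) ∈ X×X, b •_{(v,u)} c = a} h_c ⊗ h_b. Then for all a ∈ X and z₁,z₂ ∈ Z: Δ^{op}_{(z₂,z₁)}(h_a) · R^{(z₁,z₂)} = R^{(z₁,z₂)} · Δ_{(z₁,z₂)}(h_a). -/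
namespace Stmt16

open TensorProduct

/-- The universal `R`-matrix intertwines the coproduct `Δ(h_a)` built from the
binary operations `•_{(u,v)}` of the restricted p-rack algebra. -/
theorem R_intertwines_h_coproduct
    {k Q X Z : Type*} [CommRing k] [Ring Q] [Algebra k Q]
    [Fintype X] [DecidableEq X]
    (tri bullet : Z → Z → X → X → X)
    -- p-rack structure
    (hsd : ∀ (a b c : X) (z1 z2 z3 : Z),
      tri z1 z3 a (tri z2 z3 b c) = tri z2 z3 (tri z1 z2 a b) (tri z1 z3 a c))
    (hbij : ∀ (u v : Z) (a : X), Function.Bijective (tri u v a))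
    -- restricted p-rack algebra condition: a •_{(v,u)} b = b •_{(u,v)} (b ▷_{(u,v)} a)
    (hres : ∀ (u v : Z) (a b : X),
      bullet v u a b = bullet u v b (tri u v b a))
    -- p-shelf algebra relations
    (q qinv : Z → Z → X → Q) (h : X → Q)
    (hq1 : ∀ (u v : Z) (a : X), q u v a * qinv u v a = 1)
    (hq2 : ∀ (u v : Z) (a : X), qinv u v a * q u v a = 1)
    (hqq : ∀ (a b : X) (z1 z2 z3 : Z),
      q z2 z3 a * q z1 z3 b = q z1 z3 b * q z2 z3 (tri z1 z2 b a))
    (hhh : ∀ a b : X, a ≠ b → h a * h b = 0)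
    (hqh : ∀ (a b : X) (z1 z2 : Z),
      q z1 z2 b * h (tri z1 z2 b a) = h a * q z1 z2 b) :
    ∀ (a : X) (z1 z2 : Z),
      (∑ p ∈ Finset.univ.filter (fun p : X × X => bullet z2 z1 p.1 p.2 = a),
          h p.2 ⊗ₜ[k] h p.1) *
          (∑ x : X, h x ⊗ₜ[k] q z1 z2 x) =
        (∑ x : X, h x ⊗ₜ[k] q z1 z2 x) *
          (∑ p ∈ Finset.univ.filter (fun p : X × X => bullet z1 z2 p.1 p.2 = a),
            h p.1 ⊗ₜ[k] h p.2) := by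
  intro a z1 z2
  classical
  set f : X → X ≃ X := fun b => Equiv.ofBijective (tri z1 z2 b) (hbij z1 z2 b) with hf
  rw [Finset.sum_mul_sum, Finset.sum_mul_sum]
  simp only [Algebra.TensorProduct.tmul_mul_tmul]
  have hL : ∀ p ∈ Finset.univ.filter (fun p : X × X => bullet z2 z1 p.1 p.2 = a),
      (∑ x : X, (h p.2 * h x) ⊗ₜ[k] (h p.1 * q z1 z2 x))
        = (h p.2 * h p.2) ⊗ₜ[k] (h p.1 * q z1 z2 p.2) := by
    intro p _
    rw [Finset.sum_eq_single p.2]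
    · intro x _ hx
      rw [hhh p.2 x (Ne.symm hx), TensorProduct.zero_tmul]
    · intro hx; exact absurd (Finset.mem_univ p.2) hx
  rw [Finset.sum_congr rfl hL, Finset.sum_comm]
  have hR : ∀ p ∈ Finset.univ.filter (fun p : X × X => bullet z1 z2 p.1 p.2 = a),
      (∑ x : X, (h x * h p.1) ⊗ₜ[k] (q z1 z2 x * h p.2))
        = (h p.1 * h p.1) ⊗ₜ[k] (q z1 z2 p.1 * h p.2) := by
    intro p _
    rw [Finset.sum_eq_single p.1]
    · intro x _ hx
      rw [hhh x p.1 hx, TensorProduct.zero_tmul]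
    · intro hx; exact absurd (Finset.mem_univ p.1) hx
  rw [Finset.sum_congr rfl hR]
  refine Finset.sum_bij' (fun p _ => (p.2, f p.2 p.1)) (fun p _ => ((f p.1).symm p.2, p.1))
    ?_ ?_ ?_ ?_ ?_
  · intro p hp
    simp only [Finset.mem_filter, Finset.mem_univ, true_and] at hp ⊢
    rw [← hp, hres z1 z2]
    rfl
  · intro p hp
    simp only [Finset.mem_filter, Finset.mem_univ, true_and] at hp ⊢
    rw [hres z1 z2]
    have hap : tri z1 z2 p.1 ((f p.1).symm p.2) = p.2 := (f p.1).apply_symm_apply p.2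
    rw [hap, hp]
  · intro p _; simp
  · intro p _; simp
  · intro p _
    have : q z1 z2 p.2 * h (f p.2 p.1) = h p.1 * q z1 z2 p.2 := hqh p.1 p.2 z1 z2
    simp [this]

end Stmt16
end
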